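/- arXiv:1803.08959 — 5 statements merged into one kernel-verified Lean document; each statement's English description precedes it below -/
import Mathlib

section
/- Let n ≥ 1 and let π ∈ S_n avoid both 312 and 4321. If π_i = n, then i ∈ {n-2, n-1, n}. -/
open Equiv

/-- `π` contains the pattern whose one-line notation (relative order) is given by `σ`. -/
def ContainsPat {n k : ℕ} (π : Perm (Fin n)) (σ : Fin k → ℕ) : Prop :=
  ∃ f : Fin k → Fin n, StrictMono f ∧ ∀ a b : Fin k, σ a < σ b ↔ π (f a) < π (f b)

/-- `π` avoids the pattern `σ`. -/
def AvoidsPat {n k : ℕ} (π : Perm (Fin n)) (σ : Fin k → ℕ) : Prop := ¬ ContainsPat π σ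

/-- Number of cycles in the disjoint cycle decomposition, fixed points counted as cycles. -/
def cycCount {n : ℕ} (π : Perm (Fin n)) : ℕ :=
  π.cycleType.card + (Finset.univ.filter (fun x => π x = x)).card

/-- Number of fixed points. -/
def fixCount {n : ℕ} (π : Perm (Fin n)) : ℕ :=
  (Finset.univ.filter (fun x => π x = x)).card

/-- Number of excedances. -/
def excCount {n : ℕ} (π : Perm (Fin n)) : ℕ :=
  (Finset.univ.filter (fun x => x < π x)).card

/-- Number of inversions. -/
def invCount {n : ℕ} (π : Perm (Fin n)) : ℕ :=
  (Finset.univ.filter (fun p : Fin n × Fin n => p.1 < p.2 ∧ π p.2 < π p.1)).card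



lemma con312 {n : ℕ} (π : Perm (Fin n)) (x y z : Fin n) (hxy : x < y) (hyz : y < z)
    (ha : π y < π x) (hb : π z < π x) (hc : π y < π z) : ContainsPat π ![3,1,2] := by
  have h1 := ha; have h2 := hb; have h3 := hc; have h4 := hxy; have h5 := hyz
  rw [Fin.lt_def] at h1 h2 h3 h4 h5
  refine ⟨![x,y,z], ?_, ?_⟩
  · intro p q hpq
    rw [Fin.lt_def] at hpq
    fin_cases p <;> fin_cases q <;>
      simp only [Matrix.cons_val_zero, Matrix.cons_val_one, Matrix.head_cons,
        Matrix.cons_val_two, Matrix.tail_cons, Fin.zero_eta, Fin.mk_one, Fin.reduceFinMk,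
        Fin.lt_def] at hpq ⊢ <;>
      omega
  · intro p q
    fin_cases p <;> fin_cases q <;>
      simp only [Matrix.cons_val_zero, Matrix.cons_val_one, Matrix.head_cons,
        Matrix.cons_val_two, Matrix.tail_cons, Fin.zero_eta, Fin.mk_one, Fin.reduceFinMk,
        Fin.lt_def] <;>
      omega

lemma con4321 {n : ℕ} (π : Perm (Fin n)) (w x y z : Fin n) (hwx : w < x) (hxy : x < y)
    (hyz : y < z) (ha : π x < π w) (hb : π y < π x) (hc : π z < π y) :
    ContainsPat π ![4,3,2,1] := by
  have h1 := ha; have h2 := hb; have h3 := hc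
  have h4 := hwx; have h5 := hxy; have h6 := hyz
  rw [Fin.lt_def] at h1 h2 h3 h4 h5 h6
  refine ⟨![w,x,y,z], ?_, ?_⟩
  · intro p q hpq
    rw [Fin.lt_def] at hpq
    fin_cases p <;> fin_cases q <;>
      simp only [Matrix.cons_val_zero, Matrix.cons_val_one, Matrix.head_cons,
        Matrix.cons_val_two, Matrix.cons_val_three, Matrix.tail_cons, Fin.zero_eta,
        Fin.mk_one, Fin.reduceFinMk, Fin.lt_def] at hpq ⊢ <;>
      omega
  · intro p q
    fin_cases p <;> fin_cases q <;>
      simp only [Matrix.cons_val_zero, Matrix.cons_val_one, Matrix.head_cons,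
        Matrix.cons_val_two, Matrix.cons_val_three, Matrix.tail_cons, Fin.zero_eta,
        Fin.mk_one, Fin.reduceFinMk, Fin.lt_def] <;>
      omega

/-- If `π ∈ S_n` avoids 312 and 4321 and `π_i = n` (in one-line notation), then
`i ∈ {n-2, n-1, n}`; here positions and values are 0-indexed, so `π i = n - 1`
corresponds to `π_(i+1) = n` and the conclusion to `i + 1 ∈ {n-2, n-1, n}`. -/
theorem statement3 (n : ℕ) (hn : 1 ≤ n) (π : Perm (Fin n))
    (h1 : AvoidsPat π ![3,1,2]) (h2 : AvoidsPat π ![4,3,2,1])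
    (i : Fin n) (hi : (π i : ℕ) = n - 1) :
    (i : ℕ) = n - 3 ∨ (i : ℕ) = n - 2 ∨ (i : ℕ) = n - 1 := by
  by_contra hcon
  push_neg at hcon
  obtain ⟨e3, e2, e1⟩ := hcon
  have hlt : (i : ℕ) + 3 < n := by have := i.isLt; omega
  set a : Fin n := (⟨(i : ℕ) + 1, by omega⟩ : Fin n) with hadef
  set b : Fin n := (⟨(i : ℕ) + 2, by omega⟩ : Fin n) with hbdef
  set c : Fin n := (⟨(i : ℕ) + 3, by omega⟩ : Fin n) with hcdef
  have hia : i < a := by rw [Fin.lt_def]; simp [hadef]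
  have hab : a < b := by rw [Fin.lt_def]; simp [hadef, hbdef]
  have hbc : b < c := by rw [Fin.lt_def]; simp [hbdef, hcdef]
  have hsm : ∀ x : Fin n, i < x → π x < π i := by
    intro x hx
    have hne : (π x : ℕ) ≠ n - 1 := by
      intro h
      have hxi : x = i := π.injective (Fin.ext (h.trans hi.symm))
      subst hxi
      exact lt_irrefl _ hx
    have := (π x).isLt
    rw [Fin.lt_def, hi]
    omega
  have hpa := hsm a hia
  have hpb := hsm b (hia.trans hab)
  have hpc := hsm c ((hia.trans hab).trans hbc)
  by_cases cab : π a < π b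
  · exact h1 (con312 π i a b hia hab hpa hpb cab)
  by_cases cac : π a < π c
  · exact h1 (con312 π i a c hia (hab.trans hbc) hpa hpc cac)
  by_cases cbc : π b < π c
  · exact h1 (con312 π i b c (hia.trans hab) hbc hpb hpc cbc)
  · have nab : π a ≠ π b := fun h => (Fin.ne_of_lt hab) (π.injective h)
    have nbc : π b ≠ π c := fun h => (Fin.ne_of_lt hbc) (π.injective h)
    have dba : π b < π a := lt_of_le_of_ne (not_lt.mp cab) (Ne.symm nab)
    have dcb : π c < π b := lt_of_le_of_ne (not_lt.mp cbc) (Ne.symm nbc)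
    exact h2 (con4321 π i a b c hia hab hbc hpa dba dcb)
end

section
/- Let a_n = |Av_n(312, 4321)|, with the convention a_0 = 1. Then for all n ≥ 4, a_n = 2 a_{n-1} + 2 a_{n-2} - a_{n-3}. -/
open Equiv

/-- `a n` = number of permutations in `Av_n(312, 4321)`. -/
noncomputable def a (n : ℕ) : ℕ :=
  Nat.card {π : Perm (Fin n) // AvoidsPat π ![3,1,2] ∧ AvoidsPat π ![4,3,2,1]}

section AuxPatternCounting
open List

def C312 (l : List ℕ) : Prop := ∃ x y z : ℕ, [x,y,z].Sublist l ∧ y < z ∧ z < x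

/-- list contains a decreasing subsequence of length t -/

def DecPat (t : ℕ) (l : List ℕ) : Prop := ∃ w : List ℕ, w.Sublist l ∧ w.length = t ∧ w.Chain' (· > ·)

def Good (t : ℕ) (l : List ℕ) : Prop := ¬ C312 l ∧ ¬ DecPat t l

noncomputable def AvF (t n c : ℕ) : Finset (List ℕ) :=
  @Finset.filter _ (Good t) (Classical.decPred _) ((List.range n).map (· + c)).permutations.toFinset

noncomputable def D (t n c : ℕ) : ℕ := (AvF t n c).card

lemma mem_AvF {t n c : ℕ} {l : List ℕ} :
    l ∈ AvF t n c ↔ l.Perm ((List.range n).map (· + c)) ∧ Good t l := by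
  simp [AvF, List.mem_toFinset, List.mem_permutations, Finset.mem_filter]

lemma mem_shifted {x m d : ℕ} : x ∈ (List.range m).map (· + d) ↔ d ≤ x ∧ x < d + m := by
  simp only [List.mem_map, List.mem_range]
  constructor
  · rintro ⟨y, hy, rfl⟩; omega
  · intro h; exact ⟨x - d, by omega, by omega⟩

lemma nodup_shifted {m d : ℕ} : ((List.range m).map (· + d)).Nodup :=
  (List.nodup_range (n := m)).map (fun a b h => by omega)

lemma dec_mono {t l} (h : DecPat t l) : DecPat (t-1) l := by
  obtain ⟨w, hs, hl, hc⟩ := h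
  exact ⟨w.take (t-1), (w.take_sublist _).trans hs, by simp [hl],
    hc.sublist (w.take_sublist _)⟩

lemma good_sublist {t} {l l' : List ℕ} (h : Good t l) (hs : l'.Sublist l) : Good t l' := by
  refine ⟨fun ⟨x,y,z,h1,h2⟩ => h.1 ⟨x,y,z,h1.trans hs,h2⟩, fun ⟨w,h1,h2⟩ => h.2 ⟨w,h1.trans hs,h2⟩⟩

lemma c312_map_add {l : List ℕ} {c : ℕ} : C312 (l.map (· + c)) ↔ C312 l := by
  constructor
  · rintro ⟨x, y, z, hs, h1, h2⟩
    rw [List.sublist_map_iff] at hs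
    obtain ⟨w, hw, he⟩ := hs
    match w, he with
    | [x', y', z'], he =>
      simp only [List.map_cons, List.map_nil, List.cons.injEq] at he
      obtain ⟨rfl, rfl, rfl, -⟩ := he
      exact ⟨x', y', z', hw, by omega, by omega⟩
  · rintro ⟨x, y, z, hs, h1, h2⟩
    exact ⟨x + c, y + c, z + c, by simpa using hs.map (· + c), by omega, by omega⟩

lemma dec_map_add {t : ℕ} {l : List ℕ} {c : ℕ} : DecPat t (l.map (· + c)) ↔ DecPat t l := by
  constructor
  · rintro ⟨w, hs, hl, hc⟩
    rw [List.sublist_map_iff] at hs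
    obtain ⟨w', hw, rfl⟩ := hs
    refine ⟨w', hw, by simpa using hl, ?_⟩
    unfold List.Chain' at hc; rw [List.isChain_map] at hc
    exact hc.imp (fun a b h => by omega)
  · rintro ⟨w, hs, hl, hc⟩
    refine ⟨w.map (· + c), hs.map _, by simpa using hl, ?_⟩
    unfold List.Chain'; rw [List.isChain_map]
    exact hc.imp (fun a b h => by omega)

lemma good_map_add {t : ℕ} {l : List ℕ} {c : ℕ} : Good t (l.map (· + c)) ↔ Good t l := by
  unfold Good; rw [c312_map_add, dec_map_add]

lemma AvF_eq_image (t n c : ℕ) : AvF t n c = (AvF t n 0).image (List.map (· + c)) := by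
  ext l
  simp only [Finset.mem_image, mem_AvF]
  constructor
  · rintro ⟨hp, hg⟩
    refine ⟨l.map (· - c), ⟨?_, ?_⟩, ?_⟩
    · have h1 : (l.map (· - c)).map (· + c) = l := by
        rw [List.map_map]
        refine (List.map_congr_left fun x hx => ?_).trans (List.map_id l)
        have : c ≤ x := by
          have := hp.mem_iff.mp hx
          simp only [List.mem_map, List.mem_range] at this
          omega
        simp; omega
      have h2 : ((List.range n).map (· + c)).map (· - c) = (List.range n).map (· + 0) := by
        rw [List.map_map]
        exact List.map_congr_left fun x hx => by simp
      calc l.map (· - c) ~ ((List.range n).map (· + c)).map (· - c) := hp.map _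
        _ = (List.range n).map (· + 0) := h2
    · have h1 : (l.map (· - c)).map (· + c) = l := by
        rw [List.map_map]
        refine (List.map_congr_left fun x hx => ?_).trans (List.map_id l)
        have : c ≤ x := by
          have := hp.mem_iff.mp hx
          simp only [List.mem_map, List.mem_range] at this
          omega
        simp; omega
      rw [← good_map_add (c := c), h1]; exact hg
    · rw [List.map_map]
      refine (List.map_congr_left fun x hx => ?_).trans (List.map_id l)
      have : c ≤ x := by
        have := hp.mem_iff.mp hx
        simp only [List.mem_map, List.mem_range] at this
        omega
      simp; omega
  · rintro ⟨m, ⟨hp, hg⟩, rfl⟩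
    refine ⟨?_, good_map_add.mpr hg⟩
    have : ((List.range n).map (· + 0)).map (· + c) = (List.range n).map (· + c) := by
      rw [List.map_map]; exact List.map_congr_left fun x hx => by simp
    calc m.map (· + c) ~ ((List.range n).map (· + 0)).map (· + c) := hp.map _
      _ = (List.range n).map (· + c) := this

lemma D_shift (t n c : ℕ) : D t n c = D t n 0 := by
  rw [D, AvF_eq_image, Finset.card_image_of_injective _ (List.map_injective_iff.mpr (fun a b h => by omega))]
  rfl

lemma D_zero (t c : ℕ) (ht : 1 ≤ t) : D t 0 c = 1 := by
  have : AvF t 0 c = {[]} := by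
    ext l
    simp only [mem_AvF, Finset.mem_singleton]
    constructor
    · rintro ⟨hp, -⟩
      simpa using hp.eq_nil
    · rintro rfl
      refine ⟨by simp, fun ⟨x,y,z,hs,h⟩ => by simp at hs, fun ⟨w,hs,hl,h2⟩ => ?_⟩
      have : w = [] := List.sublist_nil.mp hs
      subst this; simp at hl; omega
  unfold D; rw [this]; rfl

lemma D_one (n c : ℕ) (hn : 1 ≤ n) : D 1 n c = 0 := by
  have : AvF 1 n c = ∅ := by
    ext l
    simp only [mem_AvF, Finset.notMem_empty, iff_false, not_and]
    rintro hp ⟨-, hd⟩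
    have hc : c ∈ l := hp.mem_iff.mpr (by simp [List.mem_map, List.mem_range]; omega)
    exact hd ⟨[c], by simpa using hc, rfl, by simp [List.Chain']⟩
  unfold D; rw [this]; rfl

lemma shifted_toFinset {m d : ℕ} : ((List.range m).map (· + d)).toFinset = Finset.Ico d (d + m) := by
  ext x
  rw [List.mem_toFinset, mem_shifted, Finset.mem_Ico]

lemma fsplit {A B : Finset ℕ} {c k n : ℕ}
    (hU : insert c (A ∪ B) = Finset.Ico c (c + n))
    (hd : Disjoint A B) (hcA : c ∉ A) (hcB : c ∉ B) (hA : A.card = k)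
    (hlt : ∀ x ∈ A, ∀ y ∈ B, x < y) :
    A = Finset.Ico (c+1) (c+1+k) ∧ B = Finset.Ico (c+1+k) (c+n) := by
  have hsub : ∀ z, z ∈ A ∨ z ∈ B → c ≤ z ∧ z < c + n := by
    intro z hz
    have : z ∈ insert c (A ∪ B) := by
      rcases hz with h | h
      · exact Finset.mem_insert_of_mem (Finset.mem_union_left _ h)
      · exact Finset.mem_insert_of_mem (Finset.mem_union_right _ h)
    rw [hU, Finset.mem_Ico] at this; exact this
  have key : ∀ x ∈ A, x < c + 1 + k := by
    intro x hx
    have h1 : Finset.Icc c x ⊆ insert c A := by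
      intro z hz
      rw [Finset.mem_Icc] at hz
      have hz2 : z ∈ insert c (A ∪ B) := by
        rw [hU, Finset.mem_Ico]
        have := (hsub x (Or.inl hx)).2
        omega
      rcases Finset.mem_insert.mp hz2 with h | h
      · exact h ▸ Finset.mem_insert_self _ _
      · rcases Finset.mem_union.mp h with h | h
        · exact Finset.mem_insert_of_mem h
        · exact absurd (hlt x hx z h) (by omega)
    have h2 := Finset.card_le_card h1
    rw [Nat.card_Icc] at h2
    have h3 := Finset.card_insert_le c A
    have h4 := (hsub x (Or.inl hx)).1
    omega
  have hAeq : A = Finset.Ico (c+1) (c+1+k) := by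
    apply Finset.eq_of_subset_of_card_le
    · intro x hx
      rw [Finset.mem_Ico]
      have h1 := hsub x (Or.inl hx)
      have h2 := key x hx
      have : x ≠ c := fun h => hcA (h ▸ hx)
      omega
    · rw [Nat.card_Ico, hA]; omega
  refine ⟨hAeq, ?_⟩
  ext z
  rw [Finset.mem_Ico]
  constructor
  · intro hz
    have h1 := hsub z (Or.inr hz)
    have h2 : z ≠ c := fun h => hcB (h ▸ hz)
    have h3 : z ∉ A := fun h => (Finset.disjoint_left.mp hd h) hz
    rw [hAeq, Finset.mem_Ico] at h3
    omega
  · intro hz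
    have h1 : z ∈ insert c (A ∪ B) := by rw [hU, Finset.mem_Ico]; omega
    have h2 : z ∉ A := by rw [hAeq, Finset.mem_Ico]; omega
    rcases Finset.mem_insert.mp h1 with h | h
    · omega
    · rcases Finset.mem_union.mp h with h | h
      · exact absurd h h2
      · exact h

lemma good_glue {t c k : ℕ} {α β : List ℕ} (ht : 2 ≤ t)
    (hαv : ∀ x ∈ α, c + 1 ≤ x ∧ x < c + 1 + k) (hβv : ∀ y ∈ β, c + 1 + k ≤ y)
    (hα : Good (t-1) α) (hβ : Good t β) : Good t (α ++ c :: β) := by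
  constructor
  · rintro ⟨x, y, z, hs, h1, h2⟩
    rw [List.sublist_append_iff] at hs
    obtain ⟨s, u, he, hsα, hsu⟩ := hs
    have hsm : ∀ v ∈ s, c + 1 ≤ v ∧ v < c + 1 + k := fun v hv => hαv v (hsα.subset hv)
    rcases List.sublist_cons_iff.mp hsu with hu | ⟨r, rfl2, hr⟩
    · -- u <+ β
      have hum : ∀ v ∈ u, c + 1 + k ≤ v := fun v hv => hβv v (hu.subset hv)
      match s, he with
      | [], he =>
        subst he
        exact hβ.1 ⟨x, y, z, hu, h1, h2⟩
      | [a], he =>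
        simp only [List.cons_append, List.nil_append, List.cons.injEq] at he
        obtain ⟨rfl, he⟩ := he
        subst he
        have q1 := hsm x (by simp)
        have q2 := hum z (by simp)
        omega
      | [a, b], he =>
        simp only [List.cons_append, List.nil_append, List.cons.injEq] at he
        obtain ⟨rfl, rfl, he⟩ := he
        subst he
        have q1 := hsm x (by simp)
        have q2 := hum z (by simp)
        omega
      | [a, b, d], he =>
        simp only [List.cons_append, List.nil_append, List.cons.injEq] at he
        obtain ⟨rfl, rfl, rfl, he⟩ := he
        exact hα.1 ⟨x, y, z, hsα, h1, h2⟩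
      | a :: b :: d :: e :: s', he =>
        have := congrArg List.length he
        simp at this
    · -- u = c :: r, r <+ β
      subst rfl2
      have hrm : ∀ v ∈ r, c + 1 + k ≤ v := fun v hv => hβv v (hr.subset hv)
      match s, he with
      | [], he =>
        simp only [List.nil_append, List.cons.injEq] at he
        obtain ⟨rfl, he2⟩ := he
        have q2 := hrm z (by rw [← he2]; simp)
        omega
      | [a], he =>
        simp only [List.cons_append, List.nil_append, List.cons.injEq] at he
        obtain ⟨rfl, rfl, he2⟩ := he
        have q1 := hsm x (by simp)
        have q2 := hrm z (by rw [← he2]; simp)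
        omega
      | [a, b], he =>
        simp only [List.cons_append, List.nil_append, List.cons.injEq] at he
        obtain ⟨rfl, rfl, rfl, -⟩ := he
        have q1 := hsm y (by simp)
        omega
      | [a, b, d], he =>
        have := congrArg List.length he
        simp at this
      | a :: b :: d :: e :: s', he =>
        have := congrArg List.length he
        simp at this
  · rintro ⟨w, hs, hlen, hch⟩
    rw [List.sublist_append_iff] at hs
    obtain ⟨s, u, rfl, hsα, hsu⟩ := hs
    unfold List.Chain' at hch; rw [List.isChain_append] at hch
    obtain ⟨hcs, hcu, hlast⟩ := hch
    rcases List.sublist_cons_iff.mp hsu with hu | ⟨r, rfl2, hr⟩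
    · rcases eq_or_ne u [] with rfl | hune
      · -- w = s entirely in α
        simp only [List.append_nil] at hlen
        refine hα.2 (dec_mono ⟨s, hsα, hlen, hcs⟩)
      · rcases eq_or_ne s [] with rfl | hsne
        · simp only [List.nil_append] at hlen
          exact hβ.2 ⟨u, hu, hlen, hcu⟩
        · -- boundary: last of s > head of u, but α-values < β-values
          have h1 := hlast (s.getLast hsne) (by simp [List.getLast?_eq_getLast_of_ne_nil hsne])
            (u.head hune) (by simp [List.head?_eq_head hune])
          have q1 := hαv _ (hsα.subset (List.getLast_mem hsne))
          have q2 := hβv _ (hu.subset (List.head_mem hune))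
          omega
    · -- u = c :: r
      subst rfl2
      have hrnil : r = [] := by
        rcases r with - | ⟨a, r'⟩
        · rfl
        · rw [List.isChain_cons_cons] at hcu
          have := hβv a (hr.subset (by simp))
          omega
      subst hrnil
      have hslen : s.length = t - 1 := by
        simp at hlen; omega
      refine hα.2 ⟨s, hsα, hslen, hcs⟩

lemma target_perm {n c k : ℕ} (hk : k < n) :
    ((List.range k).map (· + (c+1)) ++ c :: (List.range (n-1-k)).map (· + (c+1+k))).Perm
      ((List.range n).map (· + c)) := by
  apply List.perm_of_nodup_nodup_toFinset_eq
  · rw [List.nodup_append]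
    refine ⟨nodup_shifted, ?_, ?_⟩
    · rw [List.nodup_cons]
      refine ⟨fun h => ?_, nodup_shifted⟩
      rw [mem_shifted] at h; omega
    · intro x hx y hx2 hxy; subst hxy
      rw [mem_shifted] at hx
      rcases List.mem_cons.mp hx2 with rfl | h
      · omega
      · rw [mem_shifted] at h; omega
  · exact nodup_shifted
  · ext x
    simp only [List.mem_toFinset, List.mem_append, List.mem_cons, mem_shifted]
    omega

lemma comp_mem {t n c k : ℕ} {α β : List ℕ} (ht : 2 ≤ t) (hk : k < n)
    (hα : α ∈ AvF (t-1) k (c+1)) (hβ : β ∈ AvF t (n-1-k) (c+1+k)) :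
    α ++ c :: β ∈ AvF t n c := by
  rw [mem_AvF] at hα hβ ⊢
  obtain ⟨hpα, hgα⟩ := hα
  obtain ⟨hpβ, hgβ⟩ := hβ
  constructor
  · exact (hpα.append (hpβ.cons c)).trans (target_perm hk)
  · refine good_glue (k := k) ht (fun x hx => ?_) (fun y hy => ?_) hgα hgβ
    · have := hpα.mem_iff.mp hx; rw [mem_shifted] at this; omega
    · have := hpβ.mem_iff.mp hy; rw [mem_shifted] at this; omega

lemma decomp {t n c : ℕ} {l : List ℕ} (ht : 2 ≤ t) (hn : 1 ≤ n) (hl : l ∈ AvF t n c) :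
    ∃ k α β, k < n ∧ l = α ++ c :: β ∧ α.length = k ∧
      α ∈ AvF (t-1) k (c+1) ∧ β ∈ AvF t (n-1-k) (c+1+k) := by
  rw [mem_AvF] at hl
  obtain ⟨hp, hg⟩ := hl
  have hcl : c ∈ l := hp.mem_iff.mpr (mem_shifted.mpr ⟨le_refl c, by omega⟩)
  obtain ⟨α, β, rfl⟩ := List.append_of_mem hcl
  set k := α.length with hkdef
  have hnd : (α ++ c :: β).Nodup := hp.nodup_iff.mpr nodup_shifted
  have hlen : k + 1 + β.length = n := by
    have := hp.length_eq
    simp at this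
    omega
  have hndα : α.Nodup := (List.nodup_append'.mp hnd).1
  have hdisj : α.Disjoint (c :: β) := (List.nodup_append'.mp hnd).2.2
  have hndβ : β.Nodup := (List.nodup_cons.mp (List.nodup_append'.mp hnd).2.1).2
  have hcβ : c ∉ β := (List.nodup_cons.mp (List.nodup_append'.mp hnd).2.1).1
  have hcα : c ∉ α := fun h => hdisj h (List.mem_cons_self (a := c) (l := β))
  have hmem : ∀ z ∈ α ++ c :: β, c ≤ z ∧ z < c + n := by
    intro z hz
    have := hp.mem_iff.mp hz
    rw [mem_shifted] at this
    exact this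
  have hlt : ∀ x ∈ α, ∀ y ∈ β, x < y := by
    intro x hx y hy
    by_contra hxy
    have hne : x ≠ y := fun h => hdisj hx (h ▸ List.mem_cons_of_mem c hy)
    have hylt : y < x := by omega
    have hyc : c < y := by
      have := (hmem y (by simp [hy])).1
      rcases this.lt_or_eq with h | h
      · exact h
      · exact absurd h.symm (fun hh => hcβ (hh ▸ hy))
    have hsub : [x, c, y].Sublist (α ++ c :: β) := by
      have h1 : [x].Sublist α := List.singleton_sublist.mpr hx
      have h2 : [c, y].Sublist (c :: β) := (List.singleton_sublist.mpr hy).cons₂ c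
      exact h1.append h2
    exact hg.1 ⟨x, c, y, hsub, hyc, hylt⟩
  -- identify the value sets
  have htf : (α ++ c :: β).toFinset = Finset.Ico c (c + n) := by
    rw [List.toFinset_eq_of_perm _ _ hp, shifted_toFinset]
  have hU : insert c (α.toFinset ∪ β.toFinset) = Finset.Ico c (c + n) := by
    rw [← htf]
    ext z
    simp only [Finset.mem_insert, Finset.mem_union, List.mem_toFinset, List.mem_append,
      List.mem_cons]
    tauto
  have hdF : Disjoint α.toFinset β.toFinset := by
    rw [Finset.disjoint_left]
    intro z hz1 hz2
    rw [List.mem_toFinset] at hz1 hz2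
    exact hdisj hz1 (List.mem_cons_of_mem c hz2)
  have hsplit := fsplit hU hdF (by rwa [List.mem_toFinset]) (by rwa [List.mem_toFinset])
    (by rw [List.toFinset_card_of_nodup hndα]) (by
      intro x hx y hy
      rw [List.mem_toFinset] at hx hy
      exact hlt x hx y hy)
  have hkn : k < n := by omega
  refine ⟨k, α, β, hkn, rfl, rfl, ?_, ?_⟩
  · rw [mem_AvF]
    constructor
    · apply List.perm_of_nodup_nodup_toFinset_eq hndα nodup_shifted
      rw [shifted_toFinset, hsplit.1]
    · constructor
      · intro ⟨x, y, z, hs, h1, h2⟩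
        exact hg.1 ⟨x, y, z, hs.trans (List.sublist_append_left α (c :: β)), h1, h2⟩
      · rintro ⟨w, hs, hwl, hc⟩
        refine hg.2 ⟨w ++ [c], hs.append ((List.nil_sublist β).cons₂ c), ?_, ?_⟩
        · simp [hwl]; omega
        · unfold List.Chain'; rw [List.isChain_append]
          refine ⟨hc, by simp, ?_⟩
          intro x hx y hy
          simp at hy
          subst hy
          have hxw : x ∈ w := List.mem_of_mem_getLast? hx
          have := (hmem x (List.mem_append_left _ (hs.subset hxw))).1
          have hxne : x ≠ c := fun h => hcα (h ▸ hs.subset hxw)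
          omega
  · rw [mem_AvF]
    constructor
    · apply List.perm_of_nodup_nodup_toFinset_eq hndβ nodup_shifted
      rw [shifted_toFinset, hsplit.2]
      congr 1
      omega
    · exact good_sublist hg ((β.sublist_cons_self c).trans (List.sublist_append_right α (c :: β)))

lemma split_unique {c : ℕ} : ∀ {α α' β β' : List ℕ}, α ++ c :: β = α' ++ c :: β' →
    c ∉ α → c ∉ α' → α = α' ∧ β = β'
  | [], [], β, β', h, _, _ => by simp at h; exact ⟨rfl, h⟩
  | [], a' :: α', β, β', h, h1, h2 => by
    simp at h
    exact absurd (h.1 ▸ List.mem_cons_self (a := a') (l := α')) (by simpa [h.1] using h2)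
  | a :: α, [], β, β', h, h1, h2 => by
    simp at h
    exact absurd (h.1 ▸ List.mem_cons_self (a := a) (l := α)) (by simpa [h.1] using h1)
  | a :: α, a' :: α', β, β', h, h1, h2 => by
    simp only [List.cons_append, List.cons.injEq] at h
    obtain ⟨rfl, h⟩ := h
    have := split_unique h (fun hc => h1 (List.mem_cons_of_mem a hc))
      (fun hc => h2 (List.mem_cons_of_mem a hc))
    exact ⟨by rw [this.1], this.2⟩

lemma not_mem_first {t k c : ℕ} {α : List ℕ} (h : α ∈ AvF t k (c+1)) : c ∉ α := by
  intro hc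
  have := (mem_AvF.mp h).1.mem_iff.mp hc
  rw [mem_shifted] at this
  omega

lemma len_first {t k c : ℕ} {α : List ℕ} (h : α ∈ AvF t k (c+1)) : α.length = k := by
  have := (mem_AvF.mp h).1.length_eq
  simpa using this

lemma D_rec {t n c : ℕ} (ht : 2 ≤ t) (hn : 1 ≤ n) :
    D t n c = ∑ k ∈ Finset.range n, D (t-1) k (c+1) * D t (n-1-k) (c+1+k) := by
  have hset : AvF t n c = (Finset.range n).biUnion (fun k =>
      ((AvF (t-1) k (c+1)) ×ˢ (AvF t (n-1-k) (c+1+k))).image (fun p => p.1 ++ c :: p.2)) := by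
    ext l
    simp only [Finset.mem_biUnion, Finset.mem_image, Finset.mem_product, Finset.mem_range]
    constructor
    · intro hl
      obtain ⟨k, α, β, hk, rfl, hlen, hα, hβ⟩ := decomp ht hn hl
      exact ⟨k, hk, (α, β), ⟨hα, hβ⟩, rfl⟩
    · rintro ⟨k, hk, ⟨α, β⟩, ⟨hα, hβ⟩, rfl⟩
      exact comp_mem ht hk hα hβ
  rw [D, hset, Finset.card_biUnion]
  · apply Finset.sum_congr rfl
    intro k _
    rw [Finset.card_image_of_injOn, Finset.card_product]
    · rfl
    · rintro ⟨α, β⟩ hp ⟨α', β'⟩ hq he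
      rw [Finset.mem_coe, Finset.mem_product] at hp hq
      have := split_unique he (not_mem_first hp.1) (not_mem_first hq.1)
      exact Prod.ext this.1 this.2
  · intro k _ k' _ hkk
    rw [Function.onFun, Finset.disjoint_left]
    rintro l hl hl'
    simp only [Finset.mem_image, Finset.mem_product] at hl hl'
    obtain ⟨⟨α, β⟩, ⟨hα, hβ⟩, rfl⟩ := hl
    obtain ⟨⟨α', β'⟩, ⟨hα', hβ'⟩, he⟩ := hl'
    have := split_unique he.symm (not_mem_first hα) (not_mem_first hα')
    exact hkk (by rw [← len_first hα, this.1, len_first hα'])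

lemma D_one' (n : ℕ) : D 1 n 0 = if n = 0 then 1 else 0 := by
  rcases Nat.eq_zero_or_pos n with rfl | h
  · simp [D_zero 1 0 le_rfl]
  · simp [D_one n 0 h, Nat.pos_iff_ne_zero.mp h]

lemma D_two (n : ℕ) : D 2 n 0 = 1 := by
  induction n with
  | zero => exact D_zero 2 0 (by norm_num)
  | succ m ih =>
    rw [D_rec (by norm_num) (by omega)]
    rw [Finset.sum_eq_single 0]
    · have h0 : m + 1 - 1 - 0 = m := by omega
      rw [h0, D_zero 1 (0+1) le_rfl, D_shift, one_mul, ih]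
    · intro k hk hk0
      rw [D_shift, D_one' k, if_neg hk0]
      ring
    · simp

lemma D_two' (n c : ℕ) : D 2 n c = 1 := by rw [D_shift]; exact D_two n

lemma C_succ (n : ℕ) : D 3 (n+1) 0 = ∑ k ∈ Finset.range (n+1), D 3 (n-k) 0 := by
  rw [D_rec (by norm_num) (by omega)]
  apply Finset.sum_congr rfl
  intro k hk
  show D 2 k 1 * D 3 (n+1-1-k) (0+1+k) = D 3 (n-k) 0
  rw [D_two', D_shift]
  norm_num

lemma C_zero : D 3 0 0 = 1 := D_zero 3 0 (by norm_num)

lemma C_one : D 3 1 0 = 1 := by rw [C_succ 0]; simp [C_zero]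

lemma C_double (n : ℕ) : D 3 (n+2) 0 = 2 * D 3 (n+1) 0 := by
  rw [C_succ (n+1), Finset.sum_range_succ' (fun k => D 3 (n+1-k) 0) (n+1)]
  have h1 : ∑ i ∈ Finset.range (n+1), D 3 (n+1-(i+1)) 0 = ∑ i ∈ Finset.range (n+1), D 3 (n-i) 0 := by
    apply Finset.sum_congr rfl
    intro i hi
    congr 1
    omega
  rw [h1, ← C_succ n]
  simp only [Nat.sub_zero]
  omega

lemma A_succ (n : ℕ) : D 4 (n+1) 0 = ∑ k ∈ Finset.range (n+1), D 3 k 0 * D 4 (n-k) 0 := by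
  rw [D_rec (by norm_num) (by omega)]
  apply Finset.sum_congr rfl
  intro k hk
  show D 3 k 1 * D 4 (n+1-1-k) (0+1+k) = D 3 k 0 * D 4 (n-k) 0
  rw [D_shift, D_shift 4]
  norm_num

lemma A_rec (n : ℕ) : (D 4 (n+2) 0 : ℤ) = 3 * D 4 (n+1) 0 - D 4 n 0 := by
  have e2 : D 4 (n+2) 0 = (∑ x ∈ Finset.range n, D 3 (x+2) 0 * D 4 (n-1-x) 0)
      + D 3 1 0 * D 4 n 0 + D 3 0 0 * D 4 (n+1) 0 := by
    rw [A_succ (n+1), Finset.sum_range_succ' (fun k => D 3 k 0 * D 4 (n+1-k) 0) (n+1)]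
    rw [Finset.sum_range_succ' (fun k => D 3 (k+1) 0 * D 4 (n+1-(k+1)) 0) n]
    have h1 : ∑ i ∈ Finset.range n, D 3 (i+1+1) 0 * D 4 (n+1-(i+1+1)) 0
        = ∑ i ∈ Finset.range n, D 3 (i+2) 0 * D 4 (n-1-i) 0 := by
      apply Finset.sum_congr rfl
      intro i hi
      congr 2
      omega
    rw [h1]
    norm_num
  have e1 : D 4 (n+1) 0 = (∑ x ∈ Finset.range n, D 3 (x+1) 0 * D 4 (n-1-x) 0)
      + D 3 0 0 * D 4 n 0 := by
    rw [A_succ n, Finset.sum_range_succ' (fun k => D 3 k 0 * D 4 (n-k) 0) n]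
    have h1 : ∑ i ∈ Finset.range n, D 3 (i+1) 0 * D 4 (n-(i+1)) 0
        = ∑ i ∈ Finset.range n, D 3 (i+1) 0 * D 4 (n-1-i) 0 := by
      apply Finset.sum_congr rfl
      intro i hi
      congr 2
      omega
    rw [h1]
    norm_num
  have e3 : ∑ x ∈ Finset.range n, D 3 (x+2) 0 * D 4 (n-1-x) 0
      = 2 * ∑ x ∈ Finset.range n, D 3 (x+1) 0 * D 4 (n-1-x) 0 := by
    rw [Finset.mul_sum]
    apply Finset.sum_congr rfl
    intro x hx
    rw [C_double x]
    ring
  rw [e3, C_zero, C_one] at e2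
  rw [C_zero] at e1
  push_cast [e2, e1]
  push_cast [e1] at e2 ⊢
  omega

lemma ofFn_comp_sublist {n m : ℕ} (g : Fin n → ℕ) (f : Fin m → Fin n) (hf : StrictMono f) :
    (List.ofFn (g ∘ f)).Sublist (List.ofFn g) := by
  rw [List.sublist_iff_exists_orderEmbedding_getElem?_eq]
  refine ⟨OrderEmbedding.ofStrictMono
    (fun i => if h : i < m then ((f ⟨i, h⟩ : Fin n) : ℕ) else i + n) ?_, ?_⟩
  · intro a b hab
    dsimp only
    rcases Nat.lt_or_ge a m with ha | ha <;> rcases Nat.lt_or_ge b m with hb | hb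
    · rw [dif_pos ha, dif_pos hb]
      exact_mod_cast hf (show (⟨a, ha⟩ : Fin m) < ⟨b, hb⟩ from hab)
    · rw [dif_pos ha, dif_neg (by omega)]
      have := (f ⟨a, ha⟩).isLt
      omega
    · omega
    · rw [dif_neg (by omega), dif_neg (by omega)]
      omega
  · intro ix
    show (List.ofFn (g ∘ f))[ix]? = (List.ofFn g)[if h : ix < m then ((f ⟨ix, h⟩ : Fin n) : ℕ) else ix + n]?
    rcases Nat.lt_or_ge ix m with h | h
    · rw [dif_pos h]
      simp [List.getElem?_ofFn, h, (f ⟨ix, h⟩).isLt]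
    · rw [dif_neg (by omega)]
      have h1 : ¬ ix < m := by omega
      have h2 : ¬ ix + n < n := by omega
      simp [List.getElem?_ofFn, h1, h2]

lemma exists_indices {n : ℕ} (g : Fin n → ℕ) {w : List ℕ} (h : w.Sublist (List.ofFn g)) :
    ∃ f : Fin w.length → Fin n, StrictMono f ∧ ∀ i, w.get i = g (f i) := by
  rw [List.sublist_iff_exists_fin_orderEmbedding_get_eq] at h
  obtain ⟨f0, hf0⟩ := h
  refine ⟨fun i => Fin.cast (List.length_ofFn (f := g)) (f0 i), ?_, ?_⟩
  · intro a b hab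
    have := f0.strictMono hab
    rw [Fin.lt_def] at this ⊢
    exact this
  · intro i
    rw [hf0 i, List.get_ofFn]

lemma iff3 (x y z : ℕ) (h1 : y < z) (h2 : z < x) (u : Fin 3 → ℕ)
    (hu : ∀ i : Fin 3, [x,y,z].get i = u i) :
    ∀ a b : Fin 3, ![3,1,2] a < ![3,1,2] b ↔ u a < u b := by
  intro a b
  rw [← hu a, ← hu b]
  fin_cases a <;> fin_cases b <;> simp <;> omega

lemma iff4 (x y z w : ℕ) (h1 : w < z) (h2 : z < y) (h3 : y < x) (u : Fin 4 → ℕ)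
    (hu : ∀ i : Fin 4, [x,y,z,w].get i = u i) :
    ∀ a b : Fin 4, ![4,3,2,1] a < ![4,3,2,1] b ↔ u a < u b := by
  intro a b
  rw [← hu a, ← hu b]
  fin_cases a <;> fin_cases b <;> simp [show ((3:Fin 4):ℕ) = 3 from rfl] <;> omega

lemma bridge312 {n : ℕ} (π : Perm (Fin n)) :
    ContainsPat π ![3,1,2] ↔ C312 (List.ofFn fun i => (π i : ℕ)) := by
  set g : Fin n → ℕ := fun i => (π i : ℕ) with hg
  constructor
  · rintro ⟨f, hmono, hiff⟩
    have h12 : π (f 1) < π (f 2) := (hiff 1 2).mp (by decide)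
    have h20 : π (f 2) < π (f 0) := (hiff 2 0).mp (by decide)
    refine ⟨g (f 0), g (f 1), g (f 2), ?_, h12, h20⟩
    have hsub := ofFn_comp_sublist g f hmono
    have he : List.ofFn (g ∘ f) = [g (f 0), g (f 1), g (f 2)] := by
      simp [List.ofFn_succ]
    rwa [he] at hsub
  · rintro ⟨x, y, z, hs, h1, h2⟩
    obtain ⟨f, hmono, hval⟩ := exists_indices g hs
    have hu : ∀ i : Fin 3, [x,y,z].get i = (π (f i) : ℕ) := fun i => hval i
    refine ⟨f, hmono, fun a b => ?_⟩
    rw [Fin.lt_def]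
    exact iff3 x y z h1 h2 _ hu a b

lemma bridge4321 {n : ℕ} (π : Perm (Fin n)) :
    ContainsPat π ![4,3,2,1] ↔ DecPat 4 (List.ofFn fun i => (π i : ℕ)) := by
  set g : Fin n → ℕ := fun i => (π i : ℕ) with hg
  constructor
  · rintro ⟨f, hmono, hiff⟩
    have h10 : π (f 1) < π (f 0) := (hiff 1 0).mp (by decide)
    have h21 : π (f 2) < π (f 1) := (hiff 2 1).mp (by decide)
    have h32 : π (f 3) < π (f 2) := (hiff 3 2).mp (by decide)
    refine ⟨[g (f 0), g (f 1), g (f 2), g (f 3)], ?_, rfl, ?_⟩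
    · have hsub := ofFn_comp_sublist g f hmono
      have he : List.ofFn (g ∘ f) = [g (f 0), g (f 1), g (f 2), g (f 3)] := by
        simp [List.ofFn_succ]
      rwa [he] at hsub
    · simp only [List.Chain', List.isChain_cons_cons, List.isChain_singleton, and_true]
      exact ⟨h10, h21, h32⟩
  · rintro ⟨w, hs, hlen, hch⟩
    match w, hlen, hs, hch with
    | [x, y, z, v], _, hs, hch =>
      obtain ⟨f, hmono, hval⟩ := exists_indices g hs
      have hu : ∀ i : Fin 4, [x,y,z,v].get i = (π (f i) : ℕ) := fun i => hval i
      simp only [List.Chain', List.isChain_cons_cons, List.isChain_singleton, and_true] at hch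
      obtain ⟨c1, c2, c3⟩ := hch
      refine ⟨f, hmono, fun a b => ?_⟩
      rw [Fin.lt_def]
      exact iff4 x y z v c3 c2 c1 _ hu a b

lemma range_map_zero (n : ℕ) : (List.range n).map (· + 0) = List.range n := by
  simp

lemma toList_perm {n : ℕ} (π : Perm (Fin n)) :
    (List.ofFn fun i => ((π i : Fin n) : ℕ)).Perm (List.range n) := by
  apply List.perm_of_nodup_nodup_toFinset_eq
  · exact List.nodup_ofFn.mpr fun i j h => π.injective (Fin.ext h)
  · exact List.nodup_range (n := n)
  · ext x
    simp only [List.mem_toFinset, List.mem_ofFn, List.mem_range, Set.mem_range]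
    constructor
    · rintro ⟨i, rfl⟩; exact (π i).isLt
    · intro h; exact ⟨π.symm ⟨x, h⟩, by simp⟩

lemma a_eq (n : ℕ) : a n = D 4 n 0 := by
  classical
  have key : Nat.card {π : Perm (Fin n) // AvoidsPat π ![3,1,2] ∧ AvoidsPat π ![4,3,2,1]}
      = Nat.card {l : List ℕ // l ∈ AvF 4 n 0} := by
    apply Nat.card_congr
    refine Equiv.ofBijective (fun p => ⟨List.ofFn (fun i => ((p.1 i : Fin n) : ℕ)), ?_⟩) ⟨?_, ?_⟩
    · rw [mem_AvF, range_map_zero]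
      exact ⟨toList_perm p.1,
        fun hc => p.2.1 ((bridge312 p.1).mpr hc),
        fun hd => p.2.2 ((bridge4321 p.1).mpr hd)⟩
    · rintro ⟨π, hπ⟩ ⟨π', hπ'⟩ h
      simp only [Subtype.mk.injEq] at h ⊢
      have := List.ofFn_injective h
      ext i
      exact congrFun this i ▸ rfl
    · rintro ⟨l, hl⟩
      rw [mem_AvF, range_map_zero] at hl
      obtain ⟨hp, hg⟩ := hl
      have hlen : l.length = n := hp.length_eq.trans (List.length_range (n := n))
      have hnd : l.Nodup := hp.nodup_iff.mpr (List.nodup_range (n := n))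
      have hmem : ∀ (i : Fin l.length), l.get i < n := by
        intro i
        have := hp.mem_iff.mp (l.get_mem i)
        rwa [List.mem_range] at this
      set e : Fin n → Fin n := fun i => ⟨l.get (⟨i.val, by omega⟩ : Fin l.length), hmem _⟩ with he
      have hinj : Function.Injective e := by
        intro i j hij
        rw [he] at hij
        simp only [Fin.mk.injEq] at hij
        have := (hnd.get_inj_iff).mp hij
        simpa [Fin.ext_iff] using this
      set π : Perm (Fin n) := Equiv.ofBijective e (Finite.injective_iff_bijective.mp hinj)
        with hπdef
      have heq : (List.ofFn fun i => ((π i : Fin n) : ℕ)) = l := by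
        apply List.ext_get (by simp [hlen])
        intro i h1 h2
        rw [List.get_ofFn]
        rfl
      refine ⟨⟨π, ?_, ?_⟩, Subtype.ext heq⟩
      · intro hc
        exact hg.1 (heq ▸ (bridge312 π).mp hc)
      · intro hc
        exact hg.2 (heq ▸ (bridge4321 π).mp hc)
  rw [a, key, D]
  exact Nat.card_eq_finsetCard (AvF 4 n 0)

theorem statement4 (n : ℕ) (hn : 4 ≤ n) :
    (a n : ℤ) = 2 * a (n - 1) + 2 * a (n - 2) - a (n - 3) := by
  obtain ⟨m, rfl⟩ : ∃ m, n = m + 4 := ⟨n - 4, by omega⟩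
  have h1 : m + 4 - 1 = m + 3 := by omega
  have h2 : m + 4 - 2 = m + 2 := by omega
  have h3 : m + 4 - 3 = m + 1 := by omega
  rw [h1, h2, h3, a_eq, a_eq, a_eq, a_eq]
  have e1 := A_rec (m + 2)
  have e2 := A_rec (m + 1)
  have c1 : m + 2 + 2 = m + 4 := by omega
  have c2 : m + 2 + 1 = m + 3 := by omega
  have c3 : m + 1 + 2 = m + 3 := by omega
  have c4 : m + 1 + 1 = m + 2 := by omega
  rw [c1, c2] at e1
  rw [c3, c4] at e2
  omega

end AuxPatternCounting
end

section
/- Let d_n(k, m, ℓ, j) denote the number of involutions π ∈ I_n(312, 4321) with cyc(π) = k, fix(π) = m, exc(π) = ℓ, and inv(π) = j, with the convention that d_m(·) = 0 whenever any index is negative (and d_0(0,0,0,0) = 1). Then for all n ≥ 4, d_n(k, m, ℓ, j) = d_{n-1}(k-1, m-1, ℓ, j) + d_{n-2}(k-1, m, ℓ-1, j-1) + d_{n-3}(k-2, m-1, ℓ-1, j-3). -/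
open Equiv

/-- `d n k m l j` = number of involutions `π ∈ I_n(312, 4321)` with `cyc π = k`,
`fix π = m`, `exc π = l`, `inv π = j`. -/
noncomputable def d (n k m l j : ℕ) : ℕ :=
  Nat.card {π : Perm (Fin n) // π = π⁻¹ ∧ AvoidsPat π ![3,1,2] ∧ AvoidsPat π ![4,3,2,1] ∧ cycCount π = k ∧
    fixCount π = m ∧ excCount π = l ∧ invCount π = j}

/-- The counts extended to integer indices, equal to `0` when any index is negative
(note `d 0 0 0 0 0 = 1`). -/
noncomputable def dZ (n k m l j : ℤ) : ℤ :=
  if 0 ≤ n ∧ 0 ≤ k ∧ 0 ≤ m ∧ 0 ≤ l ∧ 0 ≤ j then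
    (d n.toNat k.toNat m.toNat l.toNat j.toNat : ℤ) else 0

/-! ### Auxiliary infrastructure -/

section Aux

lemma Equiv.Perm.apply_inv_self {α : Type*} (f : Perm α) (x : α) : f (f⁻¹ x) = x :=
  Equiv.apply_symm_apply f x

lemma Equiv.Perm.inv_apply_self {α : Type*} (f : Perm α) (x : α) : f⁻¹ (f x) = x :=
  Equiv.symm_apply_apply f x

instance {n k : ℕ} (π : Perm (Fin n)) (σ : Fin k → ℕ) : Decidable (ContainsPat π σ) := by
  unfold ContainsPat; infer_instance

instance {n k : ℕ} (π : Perm (Fin n)) (σ : Fin k → ℕ) : Decidable (AvoidsPat π σ) := by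
  unfold AvoidsPat; infer_instance

/-- Extension of a permutation on the bottom block by a permutation on the top block. -/
def extp {a b : ℕ} (σ : Perm (Fin a)) (τ : Perm (Fin b)) : Perm (Fin (a+b)) :=
  finSumFinEquiv.permCongr (Equiv.sumCongr σ τ)

lemma extp_castAdd {a b : ℕ} (σ : Perm (Fin a)) (τ : Perm (Fin b)) (i : Fin a) :
    extp σ τ (Fin.castAdd b i) = Fin.castAdd b (σ i) := by
  simp [extp, Equiv.permCongr_apply, finSumFinEquiv_symm_apply_castAdd]

lemma extp_natAdd {a b : ℕ} (σ : Perm (Fin a)) (τ : Perm (Fin b)) (i : Fin b) :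
    extp σ τ (Fin.natAdd a i) = Fin.natAdd a (τ i) := by
  simp [extp, Equiv.permCongr_apply, finSumFinEquiv_symm_apply_natAdd]

lemma fin_add_cases {a b : ℕ} (x : Fin (a+b)) :
    (∃ i : Fin a, x = Fin.castAdd b i) ∨ (∃ i : Fin b, x = Fin.natAdd a i) := by
  rcases h : finSumFinEquiv.symm x with i | i
  · left; exact ⟨i, by rw [← finSumFinEquiv_apply_left, ← h, Equiv.apply_symm_apply]⟩
  · right; exact ⟨i, by rw [← finSumFinEquiv_apply_right, ← h, Equiv.apply_symm_apply]⟩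

lemma extp_inv {a b : ℕ} (σ : Perm (Fin a)) (τ : Perm (Fin b)) :
    (extp σ τ)⁻¹ = extp σ⁻¹ τ⁻¹ := by
  apply inv_eq_of_mul_eq_one_right
  ext x
  rcases fin_add_cases x with ⟨i, rfl⟩ | ⟨i, rfl⟩ <;>
    simp [Perm.mul_apply, extp_castAdd, extp_natAdd]

lemma extp_left_inj {a b : ℕ} {σ σ' : Perm (Fin a)} {τ τ' : Perm (Fin b)}
    (h : extp σ τ = extp σ' τ') : σ = σ' := by
  ext i
  have := congrArg (fun ρ : Perm (Fin (a+b)) => ρ (Fin.castAdd b i)) h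
  simp only [extp_castAdd] at this
  have h2 := congrArg Fin.val this
  simpa using h2

lemma castAdd_lt_castAdd {a b : ℕ} {i j : Fin a} :
    Fin.castAdd b i < Fin.castAdd b j ↔ i < j := by
  simp only [Fin.lt_def, Fin.coe_castAdd]

lemma natAdd_lt_natAdd {a b : ℕ} {i j : Fin b} :
    Fin.natAdd a i < Fin.natAdd a j ↔ i < j := by
  simp only [Fin.lt_def, Fin.coe_natAdd]; omega

lemma castAdd_lt_natAdd {a b : ℕ} (i : Fin a) (j : Fin b) :
    Fin.castAdd b i < Fin.natAdd a j := by
  simp only [Fin.lt_def, Fin.coe_castAdd, Fin.coe_natAdd]; have := i.2; omega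

lemma not_natAdd_lt_castAdd {a b : ℕ} (j : Fin b) (i : Fin a) :
    ¬ Fin.natAdd a j < Fin.castAdd b i := by
  simp only [Fin.lt_def, Fin.coe_castAdd, Fin.coe_natAdd, not_lt]; have := i.2; omega

lemma ite_one_zero_congr (p q : Prop) [Decidable p] [Decidable q] (h : p ↔ q) :
    (if p then (1:ℕ) else 0) = if q then 1 else 0 := by
  simp only [h]

lemma sum_fin_add {a b : ℕ} (F : Fin (a+b) → ℕ) :
    ∑ x, F x = (∑ i : Fin a, F (Fin.castAdd b i)) + ∑ i : Fin b, F (Fin.natAdd a i) := by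
  rw [← Equiv.sum_comp finSumFinEquiv F, Fintype.sum_sum_type]
  simp

lemma card_filter_eq_sum {α : Type*} [Fintype α] (p : α → Prop) [DecidablePred p] :
    (Finset.univ.filter p).card = ∑ x : α, if p x then 1 else 0 := by
  rw [Finset.card_filter]

/-! ### Additivity of statistics -/

lemma fixCount_extp {a b : ℕ} (σ : Perm (Fin a)) (τ : Perm (Fin b)) :
    fixCount (extp σ τ) = fixCount σ + fixCount τ := by
  classical
  unfold fixCount
  rw [card_filter_eq_sum, card_filter_eq_sum, card_filter_eq_sum, sum_fin_add]
  congr 1 <;> apply Finset.sum_congr rfl <;> intro i _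
  · rw [extp_castAdd]
    simp [Fin.castAdd_inj]
  · rw [extp_natAdd]
    simp [Fin.ext_iff]

lemma excCount_extp {a b : ℕ} (σ : Perm (Fin a)) (τ : Perm (Fin b)) :
    excCount (extp σ τ) = excCount σ + excCount τ := by
  classical
  unfold excCount
  rw [card_filter_eq_sum, card_filter_eq_sum, card_filter_eq_sum, sum_fin_add]
  congr 1 <;> apply Finset.sum_congr rfl <;> intro i _
  · rw [extp_castAdd]; exact ite_one_zero_congr _ _ castAdd_lt_castAdd
  · rw [extp_natAdd]; exact ite_one_zero_congr _ _ natAdd_lt_natAdd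

lemma invCount_extp {a b : ℕ} (σ : Perm (Fin a)) (τ : Perm (Fin b)) :
    invCount (extp σ τ) = invCount σ + invCount τ := by
  classical
  unfold invCount
  rw [card_filter_eq_sum, card_filter_eq_sum, card_filter_eq_sum,
    Fintype.sum_prod_type, Fintype.sum_prod_type, Fintype.sum_prod_type,
    sum_fin_add]
  congr 1
  · apply Finset.sum_congr rfl; intro i _
    rw [sum_fin_add]
    have h2 : ∀ i2 : Fin b, (if Fin.castAdd b i < Fin.natAdd a i2 ∧
        extp σ τ (Fin.natAdd a i2) < extp σ τ (Fin.castAdd b i) then 1 else 0) = 0 := by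
      intro i2
      rw [extp_castAdd, extp_natAdd, if_neg]
      rintro ⟨-, h⟩
      exact not_natAdd_lt_castAdd _ _ h
    rw [Finset.sum_congr rfl (fun i2 _ => h2 i2)]
    simp only [Finset.sum_const_zero, add_zero]
    apply Finset.sum_congr rfl; intro i2 _
    rw [extp_castAdd, extp_castAdd]
    exact ite_one_zero_congr _ _ (and_congr castAdd_lt_castAdd castAdd_lt_castAdd)
  · apply Finset.sum_congr rfl; intro i _
    rw [sum_fin_add]
    have h1 : ∀ i2 : Fin a, (if Fin.natAdd a i < Fin.castAdd b i2 ∧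
        extp σ τ (Fin.castAdd b i2) < extp σ τ (Fin.natAdd a i) then 1 else 0) = 0 := by
      intro i2
      rw [if_neg]
      rintro ⟨h, -⟩
      exact not_natAdd_lt_castAdd _ _ h
    rw [Finset.sum_congr rfl (fun i2 _ => h1 i2)]
    simp only [Finset.sum_const_zero, zero_add]
    apply Finset.sum_congr rfl; intro i2 _
    rw [extp_natAdd, extp_natAdd]
    exact ite_one_zero_congr _ _ (and_congr natAdd_lt_natAdd natAdd_lt_natAdd)

lemma two_mul_cycCount {N : ℕ} (π : Perm (Fin N)) (h : π = π⁻¹) :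
    2 * cycCount π = N + fixCount π := by
  classical
  have hsq : π ^ 2 = 1 := by
    rw [pow_two]; nth_rewrite 2 [h]; exact mul_inv_cancel π
  have horder : orderOf π ∣ 2 := orderOf_dvd_of_pow_eq_one hsq
  have hall : ∀ r ∈ π.cycleType, r = 2 := by
    intro r hr
    have h1 : r ∣ 2 := by
      rw [← Equiv.Perm.lcm_cycleType] at horder
      exact dvd_trans (Multiset.dvd_lcm hr) horder
    have h2 : 2 ≤ r := Equiv.Perm.two_le_of_mem_cycleType hr
    have h3 : r ≤ 2 := Nat.le_of_dvd (by norm_num) h1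
    omega
  have hsum : π.cycleType.sum = 2 * π.cycleType.card := by
    rw [Multiset.eq_replicate_of_mem hall, Multiset.sum_replicate, Multiset.card_replicate,
      smul_eq_mul, mul_comm]
  have hsupp : π.support.card + fixCount π = N := by
    unfold fixCount
    rw [Equiv.Perm.support]
    simpa using Finset.card_filter_add_card_filter_not
      (s := Finset.univ) (p := fun x => ¬ π x = x)
  have := Equiv.Perm.sum_cycleType π
  unfold cycCount fixCount at *
  omega

lemma extp_invol {a b : ℕ} {σ : Perm (Fin a)} {τ : Perm (Fin b)}
    (hσ : σ = σ⁻¹) (hτ : τ = τ⁻¹) : extp σ τ = (extp σ τ)⁻¹ := by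
  rw [extp_inv, ← hσ, ← hτ]

lemma cycCount_extp {a b : ℕ} {σ : Perm (Fin a)} {τ : Perm (Fin b)}
    (hσ : σ = σ⁻¹) (hτ : τ = τ⁻¹) :
    cycCount (extp σ τ) = cycCount σ + cycCount τ := by
  have h1 := two_mul_cycCount (extp σ τ) (extp_invol hσ hτ)
  have h2 := two_mul_cycCount σ hσ
  have h3 := two_mul_cycCount τ hτ
  have h4 := fixCount_extp σ τ
  omega

/-! ### Pattern transfer -/

lemma contains_extp_iff {a b kk : ℕ} (σ : Perm (Fin a)) (τ : Perm (Fin b))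
    (pat : Fin (kk+1) → ℕ) (hpat : ∀ x : Fin (kk+1), x ≠ 0 → pat x < pat 0)
    (hτ : AvoidsPat τ pat) :
    ContainsPat (extp σ τ) pat ↔ ContainsPat σ pat := by
  constructor
  · rintro ⟨f, hf, ho⟩
    rcases fin_add_cases (f 0) with ⟨i0, h0⟩ | ⟨t0, h0⟩
    · -- all entries in bottom block
      have hlt : ∀ x, (f x).val < a := by
        intro x
        by_cases hx : x = 0
        · subst hx; rw [h0]; simpa using i0.2
        · have hv : extp σ τ (f x) < extp σ τ (f 0) := (ho x 0).mp (hpat x hx)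
          rcases fin_add_cases (f x) with ⟨i, hi⟩ | ⟨t, ht⟩
          · rw [hi]; simpa using i.2
          · exfalso
            rw [ht, extp_natAdd, h0, extp_castAdd] at hv
            exact not_natAdd_lt_castAdd _ _ hv
      refine ⟨fun x => ⟨(f x).val, hlt x⟩, ?_, ?_⟩
      · intro x y hxy
        have := hf hxy
        rwa [Fin.lt_def] at this ⊢
      · intro x y
        have hfx : ∀ x, f x = Fin.castAdd b ⟨(f x).val, hlt x⟩ := by
          intro x; apply Fin.ext; simp [Fin.coe_castAdd]
        have := ho x y
        rw [hfx x, hfx y, extp_castAdd, extp_castAdd, castAdd_lt_castAdd] at this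
        exact this
    · -- first entry in top block: all in top block
      have hge : ∀ x, a ≤ (f x).val := by
        intro x
        have : f 0 ≤ f x := hf.monotone (Fin.zero_le x)
        rw [h0] at this
        have h1 : (Fin.natAdd a t0).val ≤ (f x).val := this
        simp [Fin.coe_natAdd] at h1
        omega
      exfalso
      apply hτ
      have hfx : ∀ x, f x = Fin.natAdd a ⟨(f x).val - a, by have := (f x).2; have := hge x; omega⟩ := by
        intro x; apply Fin.ext; simp [Fin.coe_natAdd]; have := hge x; omega
      refine ⟨fun x => ⟨(f x).val - a, by have := (f x).2; have := hge x; omega⟩, ?_, ?_⟩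
      · intro x y hxy
        have := hf hxy
        rw [Fin.lt_def] at this ⊢
        have hx := hge x
        simp only
        omega
      · intro x y
        have := ho x y
        rw [hfx x, hfx y, extp_natAdd, extp_natAdd, natAdd_lt_natAdd] at this
        exact this
  · rintro ⟨f, hf, ho⟩
    refine ⟨fun x => Fin.castAdd b (f x), fun x y hxy => castAdd_lt_castAdd.mpr (hf hxy), ?_⟩
    intro x y
    rw [extp_castAdd, extp_castAdd, castAdd_lt_castAdd]
    exact ho x y

lemma avoids_extp_iff {a b kk : ℕ} (σ : Perm (Fin a)) (τ : Perm (Fin b))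
    (pat : Fin (kk+1) → ℕ) (hpat : ∀ x : Fin (kk+1), x ≠ 0 → pat x < pat 0)
    (hτ : AvoidsPat τ pat) :
    AvoidsPat (extp σ τ) pat ↔ AvoidsPat σ pat :=
  not_congr (contains_extp_iff σ τ pat hpat hτ)

/-! ### Reconstruction -/

lemma exists_extp {a b : ℕ} (π : Perm (Fin (a+b))) (τ : Perm (Fin b))
    (h : ∀ j : Fin b, π (Fin.natAdd a j) = Fin.natAdd a (τ j)) :
    ∃ σ : Perm (Fin a), π = extp σ τ := by
  have hinv : ∀ j : Fin b, π⁻¹ (Fin.natAdd a j) = Fin.natAdd a (τ⁻¹ j) := by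
    intro j
    have := h (τ⁻¹ j)
    rw [Equiv.Perm.apply_inv_self] at this
    rw [← this, Equiv.Perm.inv_apply_self]
  have hbot : ∀ (ρ : Perm (Fin (a+b))) (τ' : Perm (Fin b)),
      (∀ j : Fin b, ρ (Fin.natAdd a j) = Fin.natAdd a (τ' j)) →
      ∀ i : Fin a, (ρ (Fin.castAdd b i)).val < a := by
    intro ρ τ' hρ i
    by_contra hge
    push_neg at hge
    have h2 := (ρ (Fin.castAdd b i)).2
    set t : Fin b := ⟨(ρ (Fin.castAdd b i)).val - a, by omega⟩ with ht
    have heq : ρ (Fin.castAdd b i) = Fin.natAdd a t := by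
      apply Fin.ext; simp [Fin.coe_natAdd, ht]; omega
    have heq2 : ρ (Fin.natAdd a (τ'⁻¹ t)) = Fin.natAdd a t := by
      rw [hρ (τ'⁻¹ t)]
      congr 1
      exact Equiv.Perm.apply_inv_self τ' t
    have := ρ.injective (heq.trans heq2.symm)
    have hv := congrArg Fin.val this
    simp [Fin.coe_castAdd, Fin.coe_natAdd] at hv
    have := i.2
    omega
  have hbot1 := hbot π τ h
  have hbot2 := hbot π⁻¹ τ⁻¹ hinv
  refine ⟨⟨fun i => ⟨(π (Fin.castAdd b i)).val, hbot1 i⟩,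
          fun i => ⟨(π⁻¹ (Fin.castAdd b i)).val, hbot2 i⟩, ?_, ?_⟩, ?_⟩
  · intro i
    apply Fin.ext
    simp only
    have hc : Fin.castAdd b (⟨(π (Fin.castAdd b i)).val, hbot1 i⟩ : Fin a) = π (Fin.castAdd b i) := by
      apply Fin.ext; simp
    rw [hc, Equiv.Perm.inv_apply_self]
    simp
  · intro i
    apply Fin.ext
    simp only
    have hc : Fin.castAdd b (⟨(π⁻¹ (Fin.castAdd b i)).val, hbot2 i⟩ : Fin a) = π⁻¹ (Fin.castAdd b i) := by
      apply Fin.ext; simp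
    rw [hc, Equiv.Perm.apply_inv_self]
    simp
  · ext x
    rcases fin_add_cases x with ⟨i, rfl⟩ | ⟨i, rfl⟩
    · rw [extp_castAdd]
      simp only [Fin.coe_castAdd, Equiv.coe_fn_mk]
    · rw [extp_natAdd, h]

/-! ### The three tail permutations -/

def tau1 : Perm (Fin 1) := 1
def tau2 : Perm (Fin 2) := Equiv.swap 0 1
def tau3 : Perm (Fin 3) := Equiv.swap 0 2

lemma tau1_invol : tau1 = tau1⁻¹ := by decide
lemma tau2_invol : tau2 = tau2⁻¹ := by decide
lemma tau3_invol : tau3 = tau3⁻¹ := by decide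
lemma tau1_stats : fixCount tau1 = 1 ∧ excCount tau1 = 0 ∧ invCount tau1 = 0 := by decide
lemma tau2_stats : fixCount tau2 = 0 ∧ excCount tau2 = 1 ∧ invCount tau2 = 1 := by decide
lemma tau3_stats : fixCount tau3 = 1 ∧ excCount tau3 = 1 ∧ invCount tau3 = 3 := by decide
lemma tau1_av312 : AvoidsPat tau1 ![3,1,2] := by decide
lemma tau1_av4321 : AvoidsPat tau1 ![4,3,2,1] := by decide
lemma tau2_av312 : AvoidsPat tau2 ![3,1,2] := by decide
lemma tau2_av4321 : AvoidsPat tau2 ![4,3,2,1] := by decide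
lemma tau3_av312 : AvoidsPat tau3 ![3,1,2] := by decide
lemma tau3_av4321 : AvoidsPat tau3 ![4,3,2,1] := by decide
lemma pat312_max : ∀ x : Fin 3, x ≠ 0 → ![3,1,2] x < ![3,1,2] 0 := by decide
lemma pat4321_max : ∀ x : Fin 4, x ≠ 0 → ![4,3,2,1] x < ![4,3,2,1] 0 := by decide

lemma cyc_tau1 : cycCount tau1 = 1 := by
  have := two_mul_cycCount tau1 tau1_invol; have := tau1_stats.1; omega
lemma cyc_tau2 : cycCount tau2 = 1 := by
  have := two_mul_cycCount tau2 tau2_invol; have := tau2_stats.1; omega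
lemma cyc_tau3 : cycCount tau3 = 2 := by
  have := two_mul_cycCount tau3 tau3_invol; have := tau3_stats.1; omega

/-! ### Trichotomy -/

lemma fin3_cases (x : Fin 3) : x = 0 ∨ x = 1 ∨ x = 2 := by
  fin_cases x
  · exact Or.inl rfl
  · exact Or.inr (Or.inl rfl)
  · exact Or.inr (Or.inr rfl)

lemma fin4_cases (x : Fin 4) : x = 0 ∨ x = 1 ∨ x = 2 ∨ x = 3 := by
  fin_cases x
  · exact Or.inl rfl
  · exact Or.inr (Or.inl rfl)
  · exact Or.inr (Or.inr (Or.inl rfl))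
  · exact Or.inr (Or.inr (Or.inr rfl))

lemma strictMono3 {n : ℕ} {x0 x1 x2 : Fin n} (h01 : x0 < x1) (h12 : x1 < x2) :
    StrictMono ![x0, x1, x2] := by
  intro u v huv
  rcases fin3_cases u with rfl|rfl|rfl <;> rcases fin3_cases v with rfl|rfl|rfl <;>
    simp_all <;>
    first
      | exact h01 | exact h12 | exact lt_trans h01 h12
      | exact absurd huv (by decide)

lemma strictMono4 {n : ℕ} {x0 x1 x2 x3 : Fin n} (h01 : x0 < x1) (h12 : x1 < x2)
    (h23 : x2 < x3) : StrictMono ![x0, x1, x2, x3] := by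
  intro u v huv
  rcases fin4_cases u with rfl|rfl|rfl|rfl <;> rcases fin4_cases v with rfl|rfl|rfl|rfl <;>
    simp_all <;>
    first
      | exact h01 | exact h12 | exact h23 | exact lt_trans h01 h12
      | exact lt_trans h12 h23 | exact lt_trans h01 (lt_trans h12 h23)
      | exact absurd huv (by decide)

lemma pat3_iff {α : Type*} [LinearOrder α] (v : Fin 3 → α)
    (h10 : v 1 < v 0) (h12 : v 1 < v 2) (h20 : v 2 < v 0) :
    ∀ x y : Fin 3, ![3,1,2] x < ![3,1,2] y ↔ v x < v y := by
  intro x y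
  rcases fin3_cases x with rfl|rfl|rfl <;> rcases fin3_cases y with rfl|rfl|rfl
  · simp
  · exact iff_of_false (by decide) (asymm h10)
  · exact iff_of_false (by decide) (asymm h20)
  · exact iff_of_true (by decide) h10
  · simp
  · exact iff_of_true (by decide) h12
  · exact iff_of_true (by decide) h20
  · exact iff_of_false (by decide) (asymm h12)
  · simp

lemma pat4_iff {α : Type*} [LinearOrder α] (v : Fin 4 → α)
    (h10 : v 1 < v 0) (h21 : v 2 < v 1) (h32 : v 3 < v 2) :
    ∀ x y : Fin 4, ![4,3,2,1] x < ![4,3,2,1] y ↔ v x < v y := by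
  have h20 : v 2 < v 0 := lt_trans h21 h10
  have h30 : v 3 < v 0 := lt_trans h32 h20
  have h31 : v 3 < v 1 := lt_trans h32 h21
  intro x y
  rcases fin4_cases x with rfl|rfl|rfl|rfl <;> rcases fin4_cases y with rfl|rfl|rfl|rfl
  · simp
  · exact iff_of_false (by decide) (asymm h10)
  · exact iff_of_false (by decide) (asymm h20)
  · exact iff_of_false (by decide) (asymm h30)
  · exact iff_of_true (by decide) h10
  · simp
  · exact iff_of_false (by decide) (asymm h21)
  · exact iff_of_false (by decide) (asymm h31)
  · exact iff_of_true (by decide) h20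
  · exact iff_of_true (by decide) h21
  · simp
  · exact iff_of_false (by decide) (asymm h32)
  · exact iff_of_true (by decide) h30
  · exact iff_of_true (by decide) h31
  · exact iff_of_true (by decide) h32
  · simp

lemma trichotomy {a : ℕ} (π : Perm (Fin (a+3))) (hi : π = π⁻¹)
    (h312 : AvoidsPat π ![3,1,2]) (h4321 : AvoidsPat π ![4,3,2,1]) :
    π ⟨a+2, by omega⟩ = ⟨a+2, by omega⟩ ∨
    π ⟨a+2, by omega⟩ = ⟨a+1, by omega⟩ ∨
    (π ⟨a+2, by omega⟩ = ⟨a, by omega⟩ ∧ π ⟨a+1, by omega⟩ = ⟨a+1, by omega⟩) := by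
  have hππ : ∀ x, π (π x) = x := by
    intro x; nth_rewrite 1 [hi]; exact Equiv.Perm.inv_apply_self π x
  have hinj := π.injective
  set L : Fin (a+3) := ⟨a+2, by omega⟩ with hLdef
  have hLval : L.val = a + 2 := rfl
  have hpiL : π (π L) = L := hππ L
  have key : ∀ p : Fin (a+3), (π L).val < p.val → p.val < a + 2 → (π p).val ≠ a + 2 →
      (π L).val < (π p).val := by
    intro p hp1 hp2 hpL
    have hne : (π p) ≠ π L := fun h => by
      have := hinj h; rw [this] at hp2; omega
    rcases lt_trichotomy ((π p).val) ((π L).val) with hlt | heq | hgt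
    · exfalso
      apply h312
      have hvL : (π L).val < a + 2 := by omega
      refine ⟨![π L, p, L], strictMono3 (by rw [Fin.lt_def]; omega)
        (by rw [Fin.lt_def]; change p.val < a + 2; omega), ?_⟩
      apply pat3_iff (v := fun x => π (![π L, p, L] x))
      · show π p < π (π L)
        rw [hpiL, Fin.lt_def]; omega
      · show π p < π L
        rw [Fin.lt_def]; omega
      · show π L < π (π L)
        rw [hpiL, Fin.lt_def]; omega
    · exact absurd (Fin.ext heq) hne
    · exact hgt
  have hnotL : ∀ p : Fin (a+3), p ≠ π L → (π p).val ≠ a + 2 := by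
    intro p hp h
    have : π p = L := Fin.ext h
    have : p = π L := by conv_lhs => rw [← hππ p, this]
    exact hp this
  rcases lt_trichotomy ((π L).val) (a + 2) with hlt | heq | hgt
  swap
  · left; exact Fin.ext heq
  swap
  · exact absurd (π L).2 (by omega)
  rcases Nat.lt_or_ge ((π L).val) (a+1) with hlt1 | hge1
  swap
  · right; left; exact Fin.ext (show (π L).val = a + 1 from by omega)
  rcases Nat.lt_or_ge ((π L).val) a with hlt2 | hge2
  swap
  · right; right
    have hva : (π L).val = a := by omega
    set p1 : Fin (a+3) := ⟨a+1, by omega⟩ with hp1def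
    have hp1val : p1.val = a + 1 := rfl
    have hne : p1 ≠ π L := fun h => by
      have := congrArg Fin.val h; rw [hp1val, hva] at this; omega
    have h1 := key p1 (by omega) (by omega) (hnotL p1 hne)
    have h2 := hnotL p1 hne
    have hb := (π p1).2
    constructor
    · exact Fin.ext (show (π L).val = a from by omega)
    · exact Fin.ext (show (π p1).val = a + 1 from by omega)
  · exfalso
    have h2L := (π L).2
    set p1 : Fin (a+3) := ⟨(π L).val + 1, by omega⟩ with hp1def
    set p2 : Fin (a+3) := ⟨(π L).val + 2, by omega⟩ with hp2def
    have hp1val : p1.val = (π L).val + 1 := rfl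
    have hp2val : p2.val = (π L).val + 2 := rfl
    have hne1 : p1 ≠ π L := fun h => by
      have := congrArg Fin.val h; rw [hp1val] at this; omega
    have hne2 : p2 ≠ π L := fun h => by
      have := congrArg Fin.val h; rw [hp2val] at this; omega
    have k1 := key p1 (by omega) (by omega) (hnotL p1 hne1)
    have k2 := key p2 (by omega) (by omega) (hnotL p2 hne2)
    have t1 := hnotL p1 hne1
    have t2 := hnotL p2 hne2
    have hne12 : (π p1).val ≠ (π p2).val := by
      intro h
      have := congrArg Fin.val (hinj (Fin.ext h : π p1 = π p2))
      rw [hp1val, hp2val] at this; omega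
    have hv1 := (π p1).2
    have hv2 := (π p2).2
    rcases Nat.lt_or_ge ((π p1).val) ((π p2).val) with hlt12 | hgt12
    · apply h312
      refine ⟨![π L, p1, p2], strictMono3 (by rw [Fin.lt_def]; omega)
        (by rw [Fin.lt_def]; omega), ?_⟩
      apply pat3_iff (v := fun x => π (![π L, p1, p2] x))
      · show π p1 < π (π L)
        rw [hpiL, Fin.lt_def]; omega
      · show π p1 < π p2
        rw [Fin.lt_def]; omega
      · show π p2 < π (π L)
        rw [hpiL, Fin.lt_def]; omega
    · apply h4321
      refine ⟨![π L, p1, p2, L], strictMono4 (by rw [Fin.lt_def]; omega)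
        (by rw [Fin.lt_def]; omega) (by rw [Fin.lt_def]; omega), ?_⟩
      apply pat4_iff (v := fun x => π (![π L, p1, p2, L] x))
      · show π p1 < π (π L)
        rw [hpiL, Fin.lt_def]; omega
      · show π p2 < π p1
        rw [Fin.lt_def]; omega
      · show π L < π p2
        rw [Fin.lt_def]; omega

/-! ### Case counts -/

lemma fin1_all (x : Fin 1) : x = 0 := by omega
lemma fin2_all (x : Fin 2) : x = 0 ∨ x = 1 := by omega
lemma fin3_all (x : Fin 3) : x = 0 ∨ x = 1 ∨ x = 2 := by omega

lemma countA (a k m l j : ℕ) :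
    Nat.card {π : Perm (Fin (a+3)) // (π = π⁻¹ ∧ AvoidsPat π ![3,1,2] ∧ AvoidsPat π ![4,3,2,1] ∧
        cycCount π = k ∧ fixCount π = m ∧ excCount π = l ∧ invCount π = j) ∧
        π ⟨a+2, by omega⟩ = ⟨a+2, by omega⟩}
      = if 1 ≤ k ∧ 1 ≤ m then d (a+2) (k-1) (m-1) l j else 0 := by
  have step : Nat.card {σ : Perm (Fin (a+2)) // σ = σ⁻¹ ∧ AvoidsPat σ ![3,1,2] ∧
      AvoidsPat σ ![4,3,2,1] ∧ cycCount σ + 1 = k ∧ fixCount σ + 1 = m ∧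
      excCount σ = l ∧ invCount σ = j}
      = Nat.card {π : Perm (Fin (a+3)) // (π = π⁻¹ ∧ AvoidsPat π ![3,1,2] ∧ AvoidsPat π ![4,3,2,1] ∧
        cycCount π = k ∧ fixCount π = m ∧ excCount π = l ∧ invCount π = j) ∧
        π ⟨a+2, by omega⟩ = ⟨a+2, by omega⟩} := by
    apply Nat.card_eq_of_bijective
      (f := fun σ => ⟨extp (a := a+2) (b := 1) σ.1 tau1, ⟨extp_invol σ.2.1 tau1_invol,
        (avoids_extp_iff _ tau1 _ pat312_max tau1_av312).mpr σ.2.2.1,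
        (avoids_extp_iff _ tau1 _ pat4321_max tau1_av4321).mpr σ.2.2.2.1,
        by rw [cycCount_extp σ.2.1 tau1_invol, cyc_tau1]; exact σ.2.2.2.2.1,
        by rw [fixCount_extp, tau1_stats.1]; exact σ.2.2.2.2.2.1,
        by rw [excCount_extp, tau1_stats.2.1]; exact σ.2.2.2.2.2.2.1.symm ▸ rfl,
        by rw [invCount_extp, tau1_stats.2.2]; exact σ.2.2.2.2.2.2.2.symm ▸ rfl⟩,
        by show extp σ.1 tau1 (Fin.natAdd (a+2) (0 : Fin 1)) = _
           rw [extp_natAdd]; rfl⟩)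
    constructor
    · intro σ1 σ2 h
      exact Subtype.ext (extp_left_inj (congrArg Subtype.val h))
    · rintro ⟨π, ⟨h1, h2, h3, h4, h5, h6, h7⟩, htop⟩
      have htc : ∀ jj : Fin 1, π (Fin.natAdd (a+2) jj) = Fin.natAdd (a+2) (tau1 jj) := by
        intro jj
        rw [fin1_all jj]
        exact htop
      obtain ⟨σ, rfl⟩ := exists_extp (a := a+2) (b := 1) π tau1 htc
      have hσ : σ = σ⁻¹ := by
        rw [extp_inv] at h1
        exact extp_left_inj h1
      refine ⟨⟨σ, hσ, (avoids_extp_iff _ tau1 _ pat312_max tau1_av312).mp h2,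
        (avoids_extp_iff _ tau1 _ pat4321_max tau1_av4321).mp h3, ?_, ?_, ?_, ?_⟩, rfl⟩
      · rw [cycCount_extp hσ tau1_invol, cyc_tau1] at h4; exact h4
      · rw [fixCount_extp, tau1_stats.1] at h5; exact h5
      · rw [excCount_extp, tau1_stats.2.1] at h6; omega
      · rw [invCount_extp, tau1_stats.2.2] at h7; omega
  rw [← step]
  split_ifs with h
  · apply Nat.card_congr
    apply Equiv.subtypeEquivRight
    intro σ
    constructor
    · rintro ⟨h1, h2, h3, h4, h5, h6, h7⟩
      exact ⟨h1, h2, h3, by omega, by omega, h6, h7⟩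
    · rintro ⟨h1, h2, h3, h4, h5, h6, h7⟩
      exact ⟨h1, h2, h3, by omega, by omega, h6, h7⟩
  · have : IsEmpty {σ : Perm (Fin (a+2)) // σ = σ⁻¹ ∧ AvoidsPat σ ![3,1,2] ∧
        AvoidsPat σ ![4,3,2,1] ∧ cycCount σ + 1 = k ∧ fixCount σ + 1 = m ∧
        excCount σ = l ∧ invCount σ = j} := by
      constructor
      rintro ⟨σ, -, -, -, h4, h5, -, -⟩
      exact h (by omega)
    exact Nat.card_of_isEmpty

lemma countB (a k m l j : ℕ) :
    Nat.card {π : Perm (Fin (a+3)) // (π = π⁻¹ ∧ AvoidsPat π ![3,1,2] ∧ AvoidsPat π ![4,3,2,1] ∧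
        cycCount π = k ∧ fixCount π = m ∧ excCount π = l ∧ invCount π = j) ∧
        π ⟨a+2, by omega⟩ = ⟨a+1, by omega⟩}
      = if 1 ≤ k ∧ 1 ≤ l ∧ 1 ≤ j then d (a+1) (k-1) m (l-1) (j-1) else 0 := by
  have step : Nat.card {σ : Perm (Fin (a+1)) // σ = σ⁻¹ ∧ AvoidsPat σ ![3,1,2] ∧
      AvoidsPat σ ![4,3,2,1] ∧ cycCount σ + 1 = k ∧ fixCount σ = m ∧
      excCount σ + 1 = l ∧ invCount σ + 1 = j}
      = Nat.card {π : Perm (Fin (a+3)) // (π = π⁻¹ ∧ AvoidsPat π ![3,1,2] ∧ AvoidsPat π ![4,3,2,1] ∧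
        cycCount π = k ∧ fixCount π = m ∧ excCount π = l ∧ invCount π = j) ∧
        π ⟨a+2, by omega⟩ = ⟨a+1, by omega⟩} := by
    apply Nat.card_eq_of_bijective
      (f := fun σ => ⟨extp (a := a+1) (b := 2) σ.1 tau2, ⟨extp_invol σ.2.1 tau2_invol,
        (avoids_extp_iff _ tau2 _ pat312_max tau2_av312).mpr σ.2.2.1,
        (avoids_extp_iff _ tau2 _ pat4321_max tau2_av4321).mpr σ.2.2.2.1,
        by rw [cycCount_extp σ.2.1 tau2_invol, cyc_tau2]; exact σ.2.2.2.2.1,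
        by rw [fixCount_extp, tau2_stats.1]; exact σ.2.2.2.2.2.1.symm ▸ rfl,
        by rw [excCount_extp, tau2_stats.2.1]; exact σ.2.2.2.2.2.2.1,
        by rw [invCount_extp, tau2_stats.2.2]; exact σ.2.2.2.2.2.2.2⟩,
        by show extp σ.1 tau2 (Fin.natAdd (a+1) (1 : Fin 2)) = _
           rw [extp_natAdd]; rfl⟩)
    constructor
    · intro σ1 σ2 h
      exact Subtype.ext (extp_left_inj (congrArg Subtype.val h))
    · rintro ⟨π, ⟨h1, h2, h3, h4, h5, h6, h7⟩, htop⟩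
      have hππ : ∀ x, π (π x) = x := by
        intro x; nth_rewrite 1 [h1]; exact Equiv.Perm.inv_apply_self π x
      have htc : ∀ jj : Fin 2, π (Fin.natAdd (a+1) jj) = Fin.natAdd (a+1) (tau2 jj) := by
        intro jj
        rcases fin2_all jj with rfl | rfl
        · show π (⟨a+1, by omega⟩ : Fin (a+3)) = (⟨a+2, by omega⟩ : Fin (a+3))
          rw [← htop, hππ]
        · exact htop
      obtain ⟨σ, rfl⟩ := exists_extp (a := a+1) (b := 2) π tau2 htc
      have hσ : σ = σ⁻¹ := by
        rw [extp_inv] at h1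
        exact extp_left_inj h1
      refine ⟨⟨σ, hσ, (avoids_extp_iff _ tau2 _ pat312_max tau2_av312).mp h2,
        (avoids_extp_iff _ tau2 _ pat4321_max tau2_av4321).mp h3, ?_, ?_, ?_, ?_⟩, rfl⟩
      · rw [cycCount_extp hσ tau2_invol, cyc_tau2] at h4; exact h4
      · rw [fixCount_extp, tau2_stats.1] at h5; omega
      · rw [excCount_extp, tau2_stats.2.1] at h6; exact h6
      · rw [invCount_extp, tau2_stats.2.2] at h7; exact h7
  rw [← step]
  split_ifs with h
  · apply Nat.card_congr
    apply Equiv.subtypeEquivRight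
    intro σ
    constructor
    · rintro ⟨h1, h2, h3, h4, h5, h6, h7⟩
      exact ⟨h1, h2, h3, by omega, h5, by omega, by omega⟩
    · rintro ⟨h1, h2, h3, h4, h5, h6, h7⟩
      exact ⟨h1, h2, h3, by omega, h5, by omega, by omega⟩
  · have : IsEmpty {σ : Perm (Fin (a+1)) // σ = σ⁻¹ ∧ AvoidsPat σ ![3,1,2] ∧
        AvoidsPat σ ![4,3,2,1] ∧ cycCount σ + 1 = k ∧ fixCount σ = m ∧
        excCount σ + 1 = l ∧ invCount σ + 1 = j} := by
      constructor
      rintro ⟨σ, -, -, -, h4, -, h6, h7⟩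
      exact h (by omega)
    exact Nat.card_of_isEmpty

lemma countC (a k m l j : ℕ) :
    Nat.card {π : Perm (Fin (a+3)) // (π = π⁻¹ ∧ AvoidsPat π ![3,1,2] ∧ AvoidsPat π ![4,3,2,1] ∧
        cycCount π = k ∧ fixCount π = m ∧ excCount π = l ∧ invCount π = j) ∧
        (π ⟨a+2, by omega⟩ = ⟨a, by omega⟩ ∧ π ⟨a+1, by omega⟩ = ⟨a+1, by omega⟩)}
      = if 2 ≤ k ∧ 1 ≤ m ∧ 1 ≤ l ∧ 3 ≤ j then d a (k-2) (m-1) (l-1) (j-3) else 0 := by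
  have step : Nat.card {σ : Perm (Fin a) // σ = σ⁻¹ ∧ AvoidsPat σ ![3,1,2] ∧
      AvoidsPat σ ![4,3,2,1] ∧ cycCount σ + 2 = k ∧ fixCount σ + 1 = m ∧
      excCount σ + 1 = l ∧ invCount σ + 3 = j}
      = Nat.card {π : Perm (Fin (a+3)) // (π = π⁻¹ ∧ AvoidsPat π ![3,1,2] ∧ AvoidsPat π ![4,3,2,1] ∧
        cycCount π = k ∧ fixCount π = m ∧ excCount π = l ∧ invCount π = j) ∧
        (π ⟨a+2, by omega⟩ = ⟨a, by omega⟩ ∧ π ⟨a+1, by omega⟩ = ⟨a+1, by omega⟩)} := by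
    apply Nat.card_eq_of_bijective
      (f := fun σ => ⟨extp (a := a) (b := 3) σ.1 tau3, ⟨extp_invol σ.2.1 tau3_invol,
        (avoids_extp_iff _ tau3 _ pat312_max tau3_av312).mpr σ.2.2.1,
        (avoids_extp_iff _ tau3 _ pat4321_max tau3_av4321).mpr σ.2.2.2.1,
        by rw [cycCount_extp σ.2.1 tau3_invol, cyc_tau3]; exact σ.2.2.2.2.1,
        by rw [fixCount_extp, tau3_stats.1]; exact σ.2.2.2.2.2.1,
        by rw [excCount_extp, tau3_stats.2.1]; exact σ.2.2.2.2.2.2.1,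
        by rw [invCount_extp, tau3_stats.2.2]; exact σ.2.2.2.2.2.2.2⟩,
        ⟨by show extp σ.1 tau3 (Fin.natAdd a (2 : Fin 3)) = _
            rw [extp_natAdd]; rfl,
         by show extp σ.1 tau3 (Fin.natAdd a (1 : Fin 3)) = _
            rw [extp_natAdd]; rfl⟩⟩)
    constructor
    · intro σ1 σ2 h
      exact Subtype.ext (extp_left_inj (congrArg Subtype.val h))
    · rintro ⟨π, ⟨h1, h2, h3, h4, h5, h6, h7⟩, htopa, htopb⟩
      have hππ : ∀ x, π (π x) = x := by
        intro x; nth_rewrite 1 [h1]; exact Equiv.Perm.inv_apply_self π x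
      have htc : ∀ jj : Fin 3, π (Fin.natAdd a jj) = Fin.natAdd a (tau3 jj) := by
        intro jj
        rcases fin3_all jj with rfl | rfl | rfl
        · show π (⟨a, by omega⟩ : Fin (a+3)) = (⟨a+2, by omega⟩ : Fin (a+3))
          rw [← htopa, hππ]
        · exact htopb
        · exact htopa
      obtain ⟨σ, rfl⟩ := exists_extp (a := a) (b := 3) π tau3 htc
      have hσ : σ = σ⁻¹ := by
        rw [extp_inv] at h1
        exact extp_left_inj h1
      refine ⟨⟨σ, hσ, (avoids_extp_iff _ tau3 _ pat312_max tau3_av312).mp h2,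
        (avoids_extp_iff _ tau3 _ pat4321_max tau3_av4321).mp h3, ?_, ?_, ?_, ?_⟩, rfl⟩
      · rw [cycCount_extp hσ tau3_invol, cyc_tau3] at h4; exact h4
      · rw [fixCount_extp, tau3_stats.1] at h5; exact h5
      · rw [excCount_extp, tau3_stats.2.1] at h6; exact h6
      · rw [invCount_extp, tau3_stats.2.2] at h7; exact h7
  rw [← step]
  split_ifs with h
  · apply Nat.card_congr
    apply Equiv.subtypeEquivRight
    intro σ
    constructor
    · rintro ⟨h1, h2, h3, h4, h5, h6, h7⟩
      exact ⟨h1, h2, h3, by omega, by omega, by omega, by omega⟩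
    · rintro ⟨h1, h2, h3, h4, h5, h6, h7⟩
      exact ⟨h1, h2, h3, by omega, by omega, by omega, by omega⟩
  · have : IsEmpty {σ : Perm (Fin a) // σ = σ⁻¹ ∧ AvoidsPat σ ![3,1,2] ∧
        AvoidsPat σ ![4,3,2,1] ∧ cycCount σ + 2 = k ∧ fixCount σ + 1 = m ∧
        excCount σ + 1 = l ∧ invCount σ + 3 = j} := by
      constructor
      rintro ⟨σ, -, -, -, h4, h5, h6, h7⟩
      exact h (by omega)
    exact Nat.card_of_isEmpty

/-! ### Partition -/

lemma natCard_subtype {α : Type*} [Fintype α] (p : α → Prop) [DecidablePred p] :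
    Nat.card {x // p x} = (Finset.univ.filter p).card := by
  rw [Nat.card_eq_fintype_card, Fintype.card_subtype]

lemma natCard_tri {α : Type*} [Fintype α] (R A B C : α → Prop)
    (h1 : ∀ x, R x → A x ∨ B x ∨ C x)
    (hAB : ∀ x, A x → ¬ B x) (hAC : ∀ x, A x → ¬ C x) (hBC : ∀ x, B x → ¬ C x) :
    Nat.card {x // R x}
      = Nat.card {x // R x ∧ A x} + Nat.card {x // R x ∧ B x} + Nat.card {x // R x ∧ C x} := by
  classical
  rw [natCard_subtype, natCard_subtype, natCard_subtype, natCard_subtype]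
  have e1 := Finset.card_filter_add_card_filter_not
      (s := Finset.univ.filter R) (p := A)
  have e2 := Finset.card_filter_add_card_filter_not
      (s := Finset.univ.filter (fun x => R x ∧ ¬ A x)) (p := B)
  rw [Finset.filter_filter, Finset.filter_filter] at e1
  rw [Finset.filter_filter, Finset.filter_filter] at e2
  have e3 : Finset.univ.filter (fun x => (R x ∧ ¬ A x) ∧ B x)
      = Finset.univ.filter (fun x => R x ∧ B x) := by
    apply Finset.filter_congr; intro x _
    constructor
    · rintro ⟨⟨hr, -⟩, hb⟩; exact ⟨hr, hb⟩
    · rintro ⟨hr, hb⟩; exact ⟨⟨hr, fun ha => hAB x ha hb⟩, hb⟩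
  have e4 : Finset.univ.filter (fun x => (R x ∧ ¬ A x) ∧ ¬ B x)
      = Finset.univ.filter (fun x => R x ∧ C x) := by
    apply Finset.filter_congr; intro x _
    constructor
    · rintro ⟨⟨hr, hna⟩, hnb⟩
      rcases h1 x hr with h | h | h
      exacts [absurd h hna, absurd h hnb, ⟨hr, h⟩]
    · rintro ⟨hr, hc⟩
      exact ⟨⟨hr, fun ha => hAC x ha hc⟩, fun hb => hBC x hb hc⟩
  rw [e3, e4] at e2
  omega

lemma main_nat (a k m l j : ℕ) :
    d (a+3) k m l j
      = (if 1 ≤ k ∧ 1 ≤ m then d (a+2) (k-1) (m-1) l j else 0)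
        + (if 1 ≤ k ∧ 1 ≤ l ∧ 1 ≤ j then d (a+1) (k-1) m (l-1) (j-1) else 0)
        + (if 2 ≤ k ∧ 1 ≤ m ∧ 1 ≤ l ∧ 3 ≤ j then d a (k-2) (m-1) (l-1) (j-3) else 0) := by
  rw [← countA a k m l j, ← countB a k m l j, ← countC a k m l j]
  unfold d
  apply natCard_tri
  · rintro π ⟨h1, h2, h3, -⟩
    exact trichotomy π h1 h2 h3
  · intro π hA hB
    have := congrArg Fin.val (hA.symm.trans hB)
    simp at this
  · intro π hA hC
    have := congrArg Fin.val (hA.symm.trans hC.1)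
    simp at this
  · intro π hB hC
    have := congrArg Fin.val (hB.symm.trans hC.1)
    simp at this

lemma dZ_coe (n k m l j : ℕ) : dZ n k m l j = d n k m l j := by
  simp [dZ]

theorem statement9 (n : ℕ) (hn : 4 ≤ n) (k m l j : ℤ) :
    dZ n k m l j
      = dZ (n - 1) (k - 1) (m - 1) l j + dZ (n - 2) (k - 1) m (l - 1) (j - 1)
        + dZ (n - 3) (k - 2) (m - 1) (l - 1) (j - 3) := by
  by_cases hpos : 0 ≤ k ∧ 0 ≤ m ∧ 0 ≤ l ∧ 0 ≤ j
  case neg =>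
    unfold dZ
    rw [if_neg (by omega), if_neg (by omega), if_neg (by omega), if_neg (by omega)]
    norm_num
  obtain ⟨hk, hm, hl, hj⟩ := hpos
  obtain ⟨a, rfl⟩ : ∃ a, n = a + 3 := ⟨n - 3, by omega⟩
  set K := k.toNat with hKdef
  set M := m.toNat with hMdef
  set L := l.toNat with hLdef
  set J := j.toNat with hJdef
  have hK : (K : ℤ) = k := Int.toNat_of_nonneg hk
  have hM : (M : ℤ) = m := Int.toNat_of_nonneg hm
  have hL : (L : ℤ) = l := Int.toNat_of_nonneg hl
  have hJ : (J : ℤ) = j := Int.toNat_of_nonneg hj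
  rw [← hK, ← hM, ← hL, ← hJ]
  have e1 : ((↑(a+3) : ℤ)) - 1 = ((a+2 : ℕ) : ℤ) := by push_cast; ring
  have e2 : ((↑(a+3) : ℤ)) - 2 = ((a+1 : ℕ) : ℤ) := by push_cast; ring
  have e3 : ((↑(a+3) : ℤ)) - 3 = ((a : ℕ) : ℤ) := by push_cast; ring
  rw [e1, e2, e3]
  have hLHS : dZ (↑(a+3)) (↑K) (↑M) (↑L) (↑J) = ((d (a+3) K M L J : ℕ) : ℤ) := dZ_coe _ _ _ _ _
  have hA : dZ (↑(a+2)) ((K:ℤ) - 1) ((M:ℤ) - 1) (↑L) (↑J)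
      = (((if 1 ≤ K ∧ 1 ≤ M then d (a+2) (K-1) (M-1) L J else 0) : ℕ) : ℤ) := by
    split_ifs with h
    · rw [show ((K:ℤ) - 1) = ((K - 1 : ℕ) : ℤ) by omega,
        show ((M:ℤ) - 1) = ((M - 1 : ℕ) : ℤ) by omega, dZ_coe]
    · unfold dZ
      rw [if_neg (by omega)]
      norm_num
  have hB : dZ (↑(a+1)) ((K:ℤ) - 1) (↑M) ((L:ℤ) - 1) ((J:ℤ) - 1)
      = (((if 1 ≤ K ∧ 1 ≤ L ∧ 1 ≤ J then d (a+1) (K-1) M (L-1) (J-1) else 0) : ℕ) : ℤ) := by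
    split_ifs with h
    · rw [show ((K:ℤ) - 1) = ((K - 1 : ℕ) : ℤ) by omega,
        show ((L:ℤ) - 1) = ((L - 1 : ℕ) : ℤ) by omega,
        show ((J:ℤ) - 1) = ((J - 1 : ℕ) : ℤ) by omega, dZ_coe]
    · unfold dZ
      rw [if_neg (by omega)]
      norm_num
  have hC : dZ (↑a) ((K:ℤ) - 2) ((M:ℤ) - 1) ((L:ℤ) - 1) ((J:ℤ) - 3)
      = (((if 2 ≤ K ∧ 1 ≤ M ∧ 1 ≤ L ∧ 3 ≤ J then d a (K-2) (M-1) (L-1) (J-3) else 0) : ℕ) : ℤ) := by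
    split_ifs with h
    · rw [show ((K:ℤ) - 2) = ((K - 2 : ℕ) : ℤ) by omega,
        show ((M:ℤ) - 1) = ((M - 1 : ℕ) : ℤ) by omega,
        show ((L:ℤ) - 1) = ((L - 1 : ℕ) : ℤ) by omega,
        show ((J:ℤ) - 3) = ((J - 3 : ℕ) : ℤ) by omega, dZ_coe]
    · unfold dZ
      rw [if_neg (by omega)]
      norm_num
  rw [hLHS, hA, hB, hC, ← Nat.cast_add, ← Nat.cast_add, main_nat]
end Aux
end

section
/- Let i_n = |I_n(312, 4321)| be the number of involutions in S_n avoiding 312 and 4321, with the convention i_0 = 1. Then for all n ≥ 4, i_n = i_{n-1} + i_{n-2} + i_{n-3}; that is, the i_n satisfy the Tribonacci recurrence (with i_1 = 1, i_2 = 2, i_3 = 4). -/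
open Equiv

/-- `i n` = number of involutions in `S_n` avoiding 312 and 4321. -/
noncomputable def i (n : ℕ) : ℕ :=
  Nat.card {π : Perm (Fin n) // π = π⁻¹ ∧ AvoidsPat π ![3,1,2] ∧ AvoidsPat π ![4,3,2,1]}


instance decSM {k n : ℕ} (f : Fin k → Fin n) : Decidable (StrictMono f) :=
  decidable_of_iff (∀ a b : Fin k, a < b → f a < f b)
    ⟨fun h _ _ hab => h _ _ hab, fun h a b hab => h hab⟩

instance decCP {n k : ℕ} (π : Perm (Fin n)) (σ : Fin k → ℕ) : Decidable (ContainsPat π σ) := by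
  unfold ContainsPat; infer_instance

instance decAP {n k : ℕ} (π : Perm (Fin n)) (σ : Fin k → ℕ) : Decidable (AvoidsPat π σ) := by
  unfold AvoidsPat; infer_instance

namespace Trib
variable {m t n k : ℕ}

lemma sigma312 : ∀ x : Fin 3, ![3,1,2] x = if (x:ℕ) = 0 then 3 else if (x:ℕ) = 1 then 1 else 2 := by decide
lemma sigma4321 : ∀ x : Fin 4, ![4,3,2,1] x = 4 - (x:ℕ) := by decide

lemma c312 (π : Perm (Fin n)) :
    ContainsPat π ![3,1,2] ↔ ∃ a b c : Fin n, a < b ∧ b < c ∧ π b < π c ∧ π c < π a := by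
  constructor
  · rintro ⟨f, hf, hiff⟩
    exact ⟨f 0, f 1, f 2, hf (by decide), hf (by decide),
      (hiff 1 2).1 (by decide), (hiff 2 0).1 (by decide)⟩
  · rintro ⟨a, b, c, hab, hbc, h1, h2⟩
    rw [Fin.lt_def] at hab hbc h1 h2
    refine ⟨fun x => if (x:ℕ) = 0 then a else if (x:ℕ) = 1 then b else c, ?_, ?_⟩
    · intro x y hxy
      rw [Fin.lt_def] at hxy ⊢
      rcases x with ⟨x, hx⟩; rcases y with ⟨y, hy⟩
      simp only [Fin.val_mk] at hxy ⊢
      interval_cases x <;> interval_cases y <;> simp <;> omega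
    · intro x y
      rw [sigma312 x, sigma312 y, Fin.lt_def]
      rcases x with ⟨x, hx⟩; rcases y with ⟨y, hy⟩
      simp only [Fin.val_mk]
      interval_cases x <;> interval_cases y <;> simp <;> omega

lemma c4321 (π : Perm (Fin n)) :
    ContainsPat π ![4,3,2,1] ↔ ∃ a b c d : Fin n, a < b ∧ b < c ∧ c < d ∧
      π d < π c ∧ π c < π b ∧ π b < π a := by
  constructor
  · rintro ⟨f, hf, hiff⟩
    exact ⟨f 0, f 1, f 2, f 3, hf (by decide), hf (by decide), hf (by decide),
      (hiff 3 2).1 (by decide), (hiff 2 1).1 (by decide), (hiff 1 0).1 (by norm_num)⟩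
  · rintro ⟨a, b, c, d, hab, hbc, hcd, h1, h2, h3⟩
    rw [Fin.lt_def] at hab hbc hcd h1 h2 h3
    refine ⟨fun x => if (x:ℕ) = 0 then a else if (x:ℕ) = 1 then b else
      if (x:ℕ) = 2 then c else d, ?_, ?_⟩
    · intro x y hxy
      rw [Fin.lt_def] at hxy ⊢
      rcases x with ⟨x, hx⟩; rcases y with ⟨y, hy⟩
      simp only [Fin.val_mk] at hxy ⊢
      interval_cases x <;> interval_cases y <;> simp <;> omega
    · intro x y
      rw [sigma4321 x, sigma4321 y, Fin.lt_def]
      rcases x with ⟨x, hx⟩; rcases y with ⟨y, hy⟩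
      simp only [Fin.val_mk]
      interval_cases x <;> interval_cases y <;> simp <;> omega

def extFun (m t : ℕ) (π : Perm (Fin m)) (x : Fin (m + t)) : Fin (m + t) :=
  if h : (x : ℕ) < m then Fin.castLE (Nat.le_add_right m t) (π ⟨x, h⟩)
  else ⟨m + t - 1 - (x : ℕ) + m, by have := x.2; omega⟩

lemma extFun_lt (π : Perm (Fin m)) (x : Fin (m+t)) (h : (x:ℕ) < m) :
    (extFun m t π x : ℕ) = π ⟨x, h⟩ := by simp [extFun, h]

lemma extFun_ge (π : Perm (Fin m)) (x : Fin (m+t)) (h : m ≤ (x:ℕ)) :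
    (extFun m t π x : ℕ) = m + t - 1 - (x:ℕ) + m := by
  rw [extFun, dif_neg (Nat.not_lt.2 h)]

lemma extFun_comp (π : Perm (Fin m)) (x : Fin (m+t)) :
    extFun m t π⁻¹ (extFun m t π x) = x := by
  by_cases h : (x:ℕ) < m
  · have h1 : (extFun m t π x : ℕ) = π ⟨x, h⟩ := extFun_lt π x h
    have h2 : (extFun m t π x : ℕ) < m := by rw [h1]; exact (π ⟨x,h⟩).2
    apply Fin.ext
    rw [extFun_lt π⁻¹ _ h2]
    have he : (⟨(extFun m t π x : ℕ), h2⟩ : Fin m) = π ⟨x, h⟩ := Fin.ext h1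
    rw [he, ← Perm.mul_apply, inv_mul_cancel, Perm.one_apply]
  · push_neg at h
    have h1 := extFun_ge π x h
    have h2 : m ≤ (extFun m t π x : ℕ) := by rw [h1]; omega
    apply Fin.ext
    rw [extFun_ge π⁻¹ _ h2, h1]
    have := x.2; omega

def ext (m t : ℕ) (π : Perm (Fin m)) : Perm (Fin (m + t)) :=
  ⟨extFun m t π, extFun m t π⁻¹, extFun_comp π, by
    intro x
    have := extFun_comp (m := m) (t := t) π⁻¹ x
    simpa using this⟩

lemma ext_lt (π : Perm (Fin m)) (x : Fin (m+t)) (h : (x:ℕ) < m) :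
    (ext m t π x : ℕ) = π ⟨x, h⟩ := extFun_lt π x h

lemma ext_ge (π : Perm (Fin m)) (x : Fin (m+t)) (h : m ≤ (x:ℕ)) :
    (ext m t π x : ℕ) = m + t - 1 - (x:ℕ) + m := extFun_ge π x h

lemma ext_inv (π : Perm (Fin m)) : (ext m t π)⁻¹ = ext m t π⁻¹ := rfl

lemma ext_inj (π₁ π₂ : Perm (Fin m)) (h : ext m t π₁ = ext m t π₂) : π₁ = π₂ := by
  ext x
  have hx : ((x : ℕ) : ℕ) < m := x.2
  have := congrArg (fun e : Perm (Fin (m+t)) => ((e ⟨x, by omega⟩ : Fin (m+t)) : ℕ)) h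
  rw [ext_lt π₁ _ x.2, ext_lt π₂ _ x.2] at this
  simpa [Fin.ext_iff] using this

section Struct
variable (ν : Perm (Fin n))

-- decreasing after position k, where k is the value at the last position
lemma struct_dec (hn : 0 < n) (hinv : ∀ x, ν (ν x) = x)
    (h312 : ¬ ContainsPat ν ![3,1,2])
    (hk : (ν ⟨n-1, by omega⟩ : ℕ) = k) :
    ∀ a b : Fin n, k ≤ (a:ℕ) → a < b → (ν b : ℕ) < (ν a : ℕ) := by
  intro a b hka hab
  have hkn : k < n := by rw [← hk]; exact (ν ⟨n-1, by omega⟩).2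
  have hK : ν ⟨k, hkn⟩ = ⟨n-1, by omega⟩ := by
    have := hinv ⟨n-1, by omega⟩
    have he : ν ⟨n-1, by omega⟩ = ⟨k, hkn⟩ := Fin.ext hk
    rw [he] at this; exact this
  by_contra hcon
  push_neg at hcon
  have hne : ν a ≠ ν b := fun h => absurd (ν.injective h) (ne_of_lt hab)
  have hlt : (ν a : ℕ) < (ν b : ℕ) := lt_of_le_of_ne hcon (fun h => hne (Fin.ext h))
  rcases eq_or_lt_of_le hka with heq | hgt
  · -- a = ⟨k⟩, so ν a = n-1, maximal
    have ha : a = ⟨k, hkn⟩ := Fin.ext heq.symm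
    rw [ha, hK] at hlt
    have := (ν b).2
    simp only [Fin.val_mk] at hlt
    omega
  · -- k < a < b : pattern (⟨k⟩, a, b)
    apply h312
    rw [c312]
    refine ⟨⟨k, hkn⟩, a, b, by rw [Fin.lt_def]; exact hgt, hab, by rw [Fin.lt_def]; exact hlt, ?_⟩
    rw [Fin.lt_def, hK]
    have hb2 := (ν b).2
    have : ν b ≠ ⟨n-1, by omega⟩ := by
      intro h
      have hb : b = ⟨k, hkn⟩ := by
        have h2 := hinv b
        rw [h] at h2
        rw [← h2]
        exact Fin.ext hk
      rw [hb] at hab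
      rw [Fin.lt_def] at hab
      simp only [Fin.val_mk] at hab
      omega
    have : (ν b : ℕ) ≠ n - 1 := fun h => this (Fin.ext h)
    simp only [Fin.val_mk]
    omega

lemma struct_val (hn : 0 < n) (hinv : ∀ x, ν (ν x) = x)
    (h312 : ¬ ContainsPat ν ![3,1,2])
    (hk : (ν ⟨n-1, by omega⟩ : ℕ) = k) :
    ∀ j : Fin n, k ≤ (j:ℕ) → (ν j : ℕ) = n - 1 + k - (j:ℕ) := by
  have hdec := struct_dec ν hn hinv h312 hk
  have hkn : k < n := by rw [← hk]; exact (ν ⟨n-1, by omega⟩).2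
  have hK : (ν ⟨k, hkn⟩ : ℕ) = n - 1 := by
    have := hinv ⟨n-1, by omega⟩
    have he : ν ⟨n-1, by omega⟩ = ⟨k, hkn⟩ := Fin.ext hk
    rw [he] at this
    rw [this]
  -- upper bound by induction on d
  have hub : ∀ d : ℕ, ∀ h : k + d < n, (ν ⟨k + d, h⟩ : ℕ) ≤ n - 1 - d := by
    intro d
    induction d with
    | zero => intro h; simp only [Nat.add_zero]; rw [hK]; omega
    | succ d ih =>
      intro h
      have h' : k + d < n := by omega
      have hlt := hdec ⟨k+d, h'⟩ ⟨k+(d+1), h⟩ (by simp) (by rw [Fin.lt_def]; simp only [Fin.val_mk]; omega)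
      have := ih h'
      omega
  -- lower bound by induction on e
  have hlb : ∀ e : ℕ, ∀ h : e ≤ n - 1 - k, k + e ≤ (ν ⟨n - 1 - e, by omega⟩ : ℕ) := by
    intro e
    induction e with
    | zero =>
      intro h
      have he : (⟨n - 1 - 0, by omega⟩ : Fin n) = ⟨n-1, by omega⟩ := rfl
      rw [he, hk]
      omega
    | succ e ih =>
      intro h
      have h' : e ≤ n - 1 - k := by omega
      have hlt := hdec ⟨n-1-(e+1), by omega⟩ ⟨n-1-e, by omega⟩
        (by simp only [Fin.val_mk]; omega)
        (by rw [Fin.lt_def]; simp only [Fin.val_mk]; omega)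
      have := ih h'
      omega
  intro j hj
  have h1 : (ν ⟨k + ((j:ℕ) - k), by omega⟩ : ℕ) ≤ n - 1 - ((j:ℕ) - k) := hub _ (by omega)
  have h2 : k + (n - 1 - (j:ℕ)) ≤ (ν ⟨n - 1 - (n - 1 - (j:ℕ)), by omega⟩ : ℕ) :=
    hlb _ (by omega)
  have he1 : (⟨k + ((j:ℕ) - k), by omega⟩ : Fin n) = j := Fin.ext (by simp; omega)
  have he2 : (⟨n - 1 - (n - 1 - (j:ℕ)), by omega⟩ : Fin n) = j := Fin.ext (by simp; omega)
  rw [he1] at h1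
  rw [he2] at h2
  have := j.2
  omega

lemma struct_closed (hn : 0 < n) (hinv : ∀ x, ν (ν x) = x)
    (h312 : ¬ ContainsPat ν ![3,1,2])
    (hk : (ν ⟨n-1, by omega⟩ : ℕ) = k) :
    ∀ j : Fin n, (j:ℕ) < k → (ν j : ℕ) < k := by
  intro j hj
  by_contra hcon
  push_neg at hcon
  have hval := struct_val ν hn hinv h312 hk (ν j) hcon
  rw [hinv j] at hval
  have h1 := (ν j).2
  omega
end Struct

lemma ext_ge_ge (π : Perm (Fin m)) (x : Fin (m+t)) (h : m ≤ (x:ℕ)) :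
    m ≤ (ext m t π x : ℕ) := by
  rw [ext_ge π x h]; omega

lemma ext_lt_lt (π : Perm (Fin m)) (x : Fin (m+t)) (h : (x:ℕ) < m) :
    (ext m t π x : ℕ) < m := by
  rw [ext_lt π x h]; exact (π ⟨x, h⟩).2

lemma ext_c312 (π : Perm (Fin m)) :
    ContainsPat (ext m t π) ![3,1,2] ↔ ContainsPat π ![3,1,2] := by
  rw [c312, c312]
  constructor
  · rintro ⟨a, b, c, hab, hbc, h1, h2⟩
    rw [Fin.lt_def] at hab hbc h1 h2
    -- a must be in the prefix
    have ham : (a:ℕ) < m := by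
      by_contra hcon
      push_neg at hcon
      have hbm : m ≤ (b:ℕ) := by omega
      have hcm : m ≤ (c:ℕ) := by omega
      rw [ext_ge π b hbm, ext_ge π c hcm] at h1
      have := c.2
      omega
    have h2m : (ext m t π c : ℕ) < m := lt_trans h2 (ext_lt_lt π a ham)
    have hcm : (c:ℕ) < m := by
      by_contra hcon
      push_neg at hcon
      exact absurd h2m (Nat.not_lt.2 (ext_ge_ge π c hcon))
    have hbm : (b:ℕ) < m := by omega
    refine ⟨⟨a, ham⟩, ⟨b, hbm⟩, ⟨c, hcm⟩, by rw [Fin.lt_def]; exact hab,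
      by rw [Fin.lt_def]; exact hbc, ?_, ?_⟩
    · rw [Fin.lt_def, ← ext_lt π b hbm, ← ext_lt π c hcm]; exact h1
    · rw [Fin.lt_def, ← ext_lt π c hcm, ← ext_lt π a ham]; exact h2
  · rintro ⟨a, b, c, hab, hbc, h1, h2⟩
    rw [Fin.lt_def] at hab hbc h1 h2
    have ham := a.2; have hbm := b.2; have hcm := c.2
    refine ⟨⟨a, by omega⟩, ⟨b, by omega⟩, ⟨c, by omega⟩,
      by rw [Fin.lt_def]; exact hab, by rw [Fin.lt_def]; exact hbc, ?_, ?_⟩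
    · rw [Fin.lt_def, ext_lt π _ hbm, ext_lt π _ hcm]
      simpa using h1
    · rw [Fin.lt_def, ext_lt π _ hcm, ext_lt π _ ham]
      simpa using h2

lemma ext_c4321 (ht : t ≤ 3) (π : Perm (Fin m)) :
    ContainsPat (ext m t π) ![4,3,2,1] ↔ ContainsPat π ![4,3,2,1] := by
  rw [c4321, c4321]
  constructor
  · rintro ⟨a, b, c, d, hab, hbc, hcd, h1, h2, h3⟩
    rw [Fin.lt_def] at hab hbc hcd h1 h2 h3
    have ham : (a:ℕ) < m := by
      by_contra hcon
      push_neg at hcon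
      have := d.2
      omega
    have h3m : (ext m t π b : ℕ) < m := lt_trans h3 (ext_lt_lt π a ham)
    have hbm : (b:ℕ) < m := by
      by_contra hcon; push_neg at hcon
      exact absurd h3m (Nat.not_lt.2 (ext_ge_ge π b hcon))
    have h2m : (ext m t π c : ℕ) < m := lt_trans h2 h3m
    have hcm : (c:ℕ) < m := by
      by_contra hcon; push_neg at hcon
      exact absurd h2m (Nat.not_lt.2 (ext_ge_ge π c hcon))
    have h1m : (ext m t π d : ℕ) < m := lt_trans h1 h2m
    have hdm : (d:ℕ) < m := by
      by_contra hcon; push_neg at hcon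
      exact absurd h1m (Nat.not_lt.2 (ext_ge_ge π d hcon))
    refine ⟨⟨a, ham⟩, ⟨b, hbm⟩, ⟨c, hcm⟩, ⟨d, hdm⟩, by rw [Fin.lt_def]; exact hab,
      by rw [Fin.lt_def]; exact hbc, by rw [Fin.lt_def]; exact hcd, ?_, ?_, ?_⟩
    · rw [Fin.lt_def, ← ext_lt π d hdm, ← ext_lt π c hcm]; exact h1
    · rw [Fin.lt_def, ← ext_lt π c hcm, ← ext_lt π b hbm]; exact h2
    · rw [Fin.lt_def, ← ext_lt π b hbm, ← ext_lt π a ham]; exact h3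
  · rintro ⟨a, b, c, d, hab, hbc, hcd, h1, h2, h3⟩
    rw [Fin.lt_def] at hab hbc hcd h1 h2 h3
    have ham := a.2; have hbm := b.2; have hcm := c.2; have hdm := d.2
    refine ⟨⟨a, by omega⟩, ⟨b, by omega⟩, ⟨c, by omega⟩, ⟨d, by omega⟩,
      by rw [Fin.lt_def]; exact hab, by rw [Fin.lt_def]; exact hbc,
      by rw [Fin.lt_def]; exact hcd, ?_, ?_, ?_⟩
    · rw [Fin.lt_def, ext_lt π _ hdm, ext_lt π _ hcm]; simpa using h1
    · rw [Fin.lt_def, ext_lt π _ hcm, ext_lt π _ hbm]; simpa using h2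
    · rw [Fin.lt_def, ext_lt π _ hbm, ext_lt π _ ham]; simpa using h3

lemma ext_invol (π : Perm (Fin m)) : ext m t π = (ext m t π)⁻¹ ↔ π = π⁻¹ := by
  rw [ext_inv]
  constructor
  · exact fun h => ext_inj π π⁻¹ h
  · intro h; rw [← h]

lemma invol_iff (π : Perm (Fin n)) : π = π⁻¹ ↔ ∀ x, π (π x) = x := by
  constructor
  · intro h x
    nth_rewrite 1 [h]
    rw [← Perm.mul_apply, inv_mul_cancel, Perm.one_apply]
  · intro h
    have : ∀ x, π x = π⁻¹ x := fun x => (Perm.inv_eq_iff_eq.mpr (h x).symm).symm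
    exact Equiv.ext this

lemma decomp (m t : ℕ) (ht : 0 < t) (ν : Perm (Fin (m+t)))
    (hinv : ∀ x, ν (ν x) = x) (h312 : ¬ ContainsPat ν ![3,1,2])
    (hlast : (ν ⟨m + t - 1, by omega⟩ : ℕ) = m) :
    ∃ π : Perm (Fin m), ext m t π = ν := by
  have hn : 0 < m + t := by omega
  have hclosed := struct_closed ν hn hinv h312 hlast
  have hval := struct_val ν hn hinv h312 hlast
  have hle : m ≤ m + t := by omega
  refine ⟨⟨fun x => ⟨(ν (Fin.castLE hle x) : ℕ), hclosed _ (by simp [x.2])⟩,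
           fun x => ⟨(ν (Fin.castLE hle x) : ℕ), hclosed _ (by simp [x.2])⟩, ?_, ?_⟩, ?_⟩
  · intro x
    apply Fin.ext
    simp only [Fin.val_mk]
    have he : Fin.castLE hle (⟨(ν (Fin.castLE hle x) : ℕ), hclosed _ (by simp [x.2])⟩ : Fin m)
        = ν (Fin.castLE hle x) := Fin.ext rfl
    rw [he, hinv]
    rfl
  · intro x
    apply Fin.ext
    simp only [Fin.val_mk]
    have he : Fin.castLE hle (⟨(ν (Fin.castLE hle x) : ℕ), hclosed _ (by simp [x.2])⟩ : Fin m)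
        = ν (Fin.castLE hle x) := Fin.ext rfl
    rw [he, hinv]
    rfl
  · apply Equiv.ext
    intro x
    rcases Nat.lt_or_ge (x:ℕ) m with h | h
    · apply Fin.ext
      rw [ext_lt _ x h]
      simp only [Equiv.coe_fn_mk, Fin.val_mk]
      have hx : Fin.castLE hle ⟨(x:ℕ), h⟩ = x := Fin.ext rfl
      rw [hx]
    · apply Fin.ext
      rw [ext_ge _ x h, hval x h]
      have := x.2
      omega

def Good (n : ℕ) (π : Perm (Fin n)) : Prop :=
  π = π⁻¹ ∧ AvoidsPat π ![3,1,2] ∧ AvoidsPat π ![4,3,2,1]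

lemma good_ext_iff (ht : t ≤ 3) (π : Perm (Fin m)) :
    Good (m+t) (ext m t π) ↔ Good m π := by
  unfold Good AvoidsPat
  rw [ext_invol, ext_c312, ext_c4321 ht]

lemma ext_last (ht : 0 < t) (π : Perm (Fin m)) :
    (ext m t π ⟨m + t - 1, by omega⟩ : ℕ) = m := by
  rw [ext_ge π _ (by simp only [Fin.val_mk]; omega)]
  simp only [Fin.val_mk]
  omega

lemma ext_apply_last (m t : ℕ) (π : Perm (Fin m)) (x : Fin (m+t)) (hx : (x:ℕ) = m + t - 1)
    (ht : 0 < t) : (ext m t π x : ℕ) = m := by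
  rw [ext_ge π x (by omega)]
  omega

abbrev S (n : ℕ) := {π : Perm (Fin n) // Good n π}

def Phi (m : ℕ) : (S (m+2) ⊕ S (m+1) ⊕ S m) → S (m+3)
  | Sum.inl ⟨π, h⟩ => ⟨ext (m+2) 1 π, (good_ext_iff (by omega) π).2 h⟩
  | Sum.inr (Sum.inl ⟨π, h⟩) => ⟨ext (m+1) 2 π, (good_ext_iff (by omega) π).2 h⟩
  | Sum.inr (Sum.inr ⟨π, h⟩) => ⟨ext m 3 π, (good_ext_iff (by omega) π).2 h⟩

lemma Phi_inj (m : ℕ) : Function.Injective (Phi m) := by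
  have L : Fin (m+3) := ⟨m+2, by omega⟩
  intro x y h
  have hval := congrArg (fun s : S (m+3) => ((s.1 ⟨m+2, by omega⟩ : Fin (m+3)) : ℕ)) h
  rcases x with ⟨π₁, h₁⟩ | (⟨π₁, h₁⟩ | ⟨π₁, h₁⟩) <;>
    rcases y with ⟨π₂, h₂⟩ | (⟨π₂, h₂⟩ | ⟨π₂, h₂⟩) <;>
    simp only [Phi] at h hval
  · have := ext_inj π₁ π₂ (congrArg Subtype.val h)
    exact congrArg Sum.inl (Subtype.ext this)
  · exfalso
    rw [ext_apply_last (m+2) 1 π₁ _ (by simp only [Fin.val_mk]; omega) (by omega),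
        ext_apply_last (m+1) 2 π₂ _ (by simp only [Fin.val_mk]; omega) (by omega)] at hval
    omega
  · exfalso
    rw [ext_apply_last (m+2) 1 π₁ _ (by simp only [Fin.val_mk]; omega) (by omega),
        ext_apply_last m 3 π₂ _ (by simp only [Fin.val_mk]; omega) (by omega)] at hval
    omega
  · exfalso
    rw [ext_apply_last (m+1) 2 π₁ _ (by simp only [Fin.val_mk]; omega) (by omega),
        ext_apply_last (m+2) 1 π₂ _ (by simp only [Fin.val_mk]; omega) (by omega)] at hval
    omega
  · have := ext_inj π₁ π₂ (congrArg Subtype.val h)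
    exact congrArg (fun s => Sum.inr (Sum.inl s)) (Subtype.ext this)
  · exfalso
    rw [ext_apply_last (m+1) 2 π₁ _ (by simp only [Fin.val_mk]; omega) (by omega),
        ext_apply_last m 3 π₂ _ (by simp only [Fin.val_mk]; omega) (by omega)] at hval
    omega
  · exfalso
    rw [ext_apply_last m 3 π₁ _ (by simp only [Fin.val_mk]; omega) (by omega),
        ext_apply_last (m+2) 1 π₂ _ (by simp only [Fin.val_mk]; omega) (by omega)] at hval
    omega
  · exfalso
    rw [ext_apply_last m 3 π₁ _ (by simp only [Fin.val_mk]; omega) (by omega),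
        ext_apply_last (m+1) 2 π₂ _ (by simp only [Fin.val_mk]; omega) (by omega)] at hval
    omega
  · have := ext_inj π₁ π₂ (congrArg Subtype.val h)
    exact congrArg (fun s => Sum.inr (Sum.inr s)) (Subtype.ext this)

lemma dec4 {n k : ℕ} (ν : Perm (Fin n))
    (hval : ∀ j : Fin n, k ≤ (j:ℕ) → (ν j : ℕ) = n - 1 + k - (j:ℕ))
    (a b : Fin n) (ha : k ≤ (a:ℕ)) (hb : k ≤ (b:ℕ)) (hab : (a:ℕ) < (b:ℕ)) :
    ν b < ν a := by
  rw [Fin.lt_def, hval a ha, hval b hb]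
  have := a.2
  have := b.2
  omega

lemma Phi_surj (m : ℕ) : Function.Surjective (Phi m) := by
  rintro ⟨ν, hgood⟩
  have hinv : ∀ x, ν (ν x) = x := (invol_iff ν).1 hgood.1
  have h312 : ¬ ContainsPat ν ![3,1,2] := hgood.2.1
  have h4321 : ¬ ContainsPat ν ![4,3,2,1] := hgood.2.2
  obtain ⟨k, hk⟩ : ∃ k, (ν ⟨m+3-1, by omega⟩ : ℕ) = k := ⟨_, rfl⟩
  have hkb : k < m + 3 := hk ▸ (ν ⟨m+3-1, by omega⟩).2
  have hkm : m ≤ k := by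
    by_contra hcon
    push_neg at hcon
    apply h4321
    rw [c4321]
    have hval := struct_val ν (by omega) hinv h312 hk
    refine ⟨⟨k, by omega⟩, ⟨k+1, by omega⟩, ⟨k+2, by omega⟩, ⟨k+3, by omega⟩,
      by rw [Fin.lt_def]; simp only [Fin.val_mk]; omega,
      by rw [Fin.lt_def]; simp only [Fin.val_mk]; omega,
      by rw [Fin.lt_def]; simp only [Fin.val_mk]; omega, ?_, ?_, ?_⟩ <;>
    · exact dec4 ν hval _ _ (by simp only [Fin.val_mk]; omega)
        (by simp only [Fin.val_mk]; omega) (by simp only [Fin.val_mk]; omega)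
  -- k ∈ {m, m+1, m+2}
  rcases (by omega : k = m + 2 ∨ k = m + 1 ∨ k = m) with hke | hke | hke
  · obtain ⟨π, hext⟩ := decomp (m+2) 1 (by omega) ν hinv h312 (hke ▸ hk)
    have hg : Good (m+2) π := (good_ext_iff (t := 1) (by omega) π).1 (by rw [← hext] at hgood; exact hgood)
    exact ⟨Sum.inl ⟨π, hg⟩, Subtype.ext hext⟩
  · obtain ⟨π, hext⟩ := decomp (m+1) 2 (by omega) ν hinv h312 (hke ▸ hk)
    have hg : Good (m+1) π := (good_ext_iff (t := 2) (by omega) π).1 (by rw [← hext] at hgood; exact hgood)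
    exact ⟨Sum.inr (Sum.inl ⟨π, hg⟩), Subtype.ext hext⟩
  · obtain ⟨π, hext⟩ := decomp m 3 (by omega) ν hinv h312 (hke ▸ hk)
    have hg : Good m π := (good_ext_iff (t := 3) (by omega) π).1 (by rw [← hext] at hgood; exact hgood)
    exact ⟨Sum.inr (Sum.inr ⟨π, hg⟩), Subtype.ext hext⟩

lemma i_eq (n : ℕ) : i n = Nat.card (S n) := rfl

lemma key (m : ℕ) : i (m+3) = i (m+2) + i (m+1) + i m := by
  have hbij : Function.Bijective (Phi m) := ⟨Phi_inj m, Phi_surj m⟩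
  have hc := Nat.card_congr (Equiv.ofBijective _ hbij)
  rw [Nat.card_sum, Nat.card_sum] at hc
  rw [i_eq, i_eq, i_eq, i_eq, ← hc]
  omega

end Trib

theorem statement10 :
    i 1 = 1 ∧ i 2 = 2 ∧ i 3 = 4 ∧
      ∀ n : ℕ, 4 ≤ n → i n = i (n - 1) + i (n - 2) + i (n - 3) := by
  refine ⟨?_, ?_, ?_, ?_⟩
  · rw [i, Nat.card_eq_fintype_card]; decide
  · rw [i, Nat.card_eq_fintype_card]; decide
  · rw [i, Nat.card_eq_fintype_card]; decide
  · intro n hn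
    obtain ⟨m, rfl⟩ : ∃ m, n = m + 3 := ⟨n - 3, by omega⟩
    exact Trib.key m
end

section
/- Let n ≥ 1 and let π ∈ S_n avoid both 321 and 4123. If π_i = n, then i ∈ {n-2, n-1, n}. -/
open Equiv

lemma c321 {n : ℕ} (π : Perm (Fin n)) {a b c : Fin n} (hab : a < b) (hbc : b < c)
    (hx : π b < π a) (hy : π c < π b) : ContainsPat π ![3,2,1] := by
  refine ⟨![a,b,c], ?_, ?_⟩
  · intro x y hxy
    fin_cases x <;> fin_cases y <;> simp at hxy ⊢ <;>
      first | exact hab | exact hbc | exact hab.trans hbc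
  · intro x y
    fin_cases x <;> fin_cases y <;> simp <;>
      first
      | exact hx | exact hy | exact hy.trans hx
      | exact hx.le | exact hy.le | exact (hy.trans hx).le
      | exact le_refl _

lemma c4123 {n : ℕ} (π : Perm (Fin n)) {a b c d : Fin n} (hab : a < b) (hbc : b < c)
    (hcd : c < d) (h1 : π b < π c) (h2 : π c < π d) (h3 : π d < π a) :
    ContainsPat π ![4,1,2,3] := by
  refine ⟨![a,b,c,d], ?_, ?_⟩
  · intro x y hxy
    fin_cases x <;> fin_cases y <;> simp at hxy ⊢ <;>
      first
        | exact hab | exact hbc | exact hcd | exact hab.trans hbc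
        | exact hbc.trans hcd | exact (hab.trans hbc).trans hcd
  · intro x y
    fin_cases x <;> fin_cases y <;> simp <;>
      first
      | exact h1 | exact h2 | exact h3 | exact h1.trans h2
      | exact h2.trans h3 | exact (h1.trans h2).trans h3
      | exact h1.le | exact h2.le | exact h3.le
      | exact (h1.trans h2).le | exact (h2.trans h3).le
      | exact ((h1.trans h2).trans h3).le
      | exact le_refl _

/-- If `π ∈ S_n` avoids 321 and 4123 and `π_i = n` (in one-line notation), then
`i ∈ {n-2, n-1, n}`; here positions and values are 0-indexed, so `π i = n - 1`
corresponds to `π_(i+1) = n` and the conclusion to `i + 1 ∈ {n-2, n-1, n}`. -/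
theorem statement14 (n : ℕ) (hn : 1 ≤ n) (π : Perm (Fin n))
    (h1 : AvoidsPat π ![3,2,1]) (h2 : AvoidsPat π ![4,1,2,3])
    (i : Fin n) (hi : (π i : ℕ) = n - 1) :
    (i : ℕ) = n - 3 ∨ (i : ℕ) = n - 2 ∨ (i : ℕ) = n - 1 := by
  by_contra hcon
  push_neg at hcon
  obtain ⟨e3, e2, e1⟩ := hcon
  have hin : (i : ℕ) < n := i.isLt
  have hlt : (i : ℕ) + 3 < n := by omega
  set b : Fin n := ⟨i + 1, by omega⟩ with hb
  set c : Fin n := ⟨i + 2, by omega⟩ with hc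
  set d : Fin n := ⟨i + 3, by omega⟩ with hd
  have hmax : ∀ x : Fin n, x ≠ i → π x < π i := by
    intro x hx
    have hx1 : (π x : ℕ) < n := (π x).isLt
    have hx2 : π x ≠ π i := fun h => hx (π.injective h)
    have hx3 : (π x : ℕ) ≠ (π i : ℕ) := fun h => hx2 (Fin.ext h)
    rw [Fin.lt_def]
    omega
  have hib : i < b := by rw [Fin.lt_def]; simp [hb]
  have hbc : b < c := by rw [Fin.lt_def]; simp [hb, hc]
  have hcd : c < d := by rw [Fin.lt_def]; simp [hc, hd]
  have hbi : b ≠ i := ne_of_gt hib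
  have hci : c ≠ i := ne_of_gt (hib.trans hbc)
  have hdi : d ≠ i := ne_of_gt ((hib.trans hbc).trans hcd)
  have hpbc : π b < π c := by
    rcases lt_or_ge (π b) (π c) with h | h
    · exact h
    · have : π c < π b := lt_of_le_of_ne h (fun heq => (hbc.ne (π.injective heq.symm)).elim)
      exact absurd (c321 π hib hbc (hmax b hbi) this) h1
  have hpcd : π c < π d := by
    rcases lt_or_ge (π c) (π d) with h | h
    · exact h
    · have : π d < π c := lt_of_le_of_ne h (fun heq => (hcd.ne (π.injective heq.symm)).elim)
      exact absurd (c321 π (hib.trans hbc) hcd (hmax c hci) this) h1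
  exact h2 (c4123 π hib hbc hcd hpbc hpcd (hmax d hdi))
end
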